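/- arXiv:0709.0048 — 6 statements merged into one kernel-verified Lean document; each statement's English description precedes it below -/
import Mathlib

section
/- Let m1, m2, m3 be odd integers with m1 ≥ m2 ≥ m3 ≥ 3. Then there exists a coloring of the edges of the complete graph on 4·m1 − 4 vertices with three colors such that color 1 contains no cycle of length m1, color 2 contains no cycle of length m2, and color 3 contains no cycle of length m3. (Construction: split the vertex set into four equal parts V1, V2, V3, V4; color all edges inside each part with color 1, the edges between the pairs (V1,V2), (V2,V3), (V3,V4) with color 2, and the edges between the pairs (V1,V3), (V2,V4), (V1,V4) with color 3; then color 1 has no cycle longer than m1 − 1 and colors 2 and 3 are bipartite, hence contain no odd cycle.) -/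
open SimpleGraph

/-- The graph spanned by color `i` of a coloring `C` of the edges of the complete graph. -/
def colorGraph {V : Type*} {k : ℕ} (C : Sym2 V → Fin k) (i : Fin k) : SimpleGraph V where
  Adj u v := u ≠ v ∧ C s(u, v) = i
  symm := by
    constructor
    intro u v h
    refine ⟨h.1.symm, ?_⟩
    rw [Sym2.eq_swap]
    exact h.2
  loopless := by
    constructor
    intro v h
    exact h.1 rfl

/-- `G` contains a cycle of length exactly `L`. -/
def hasCycleLength {V : Type*} (G : SimpleGraph V) (L : ℕ) : Prop :=
  ∃ (v : V) (w : G.Walk v v), w.IsCycle ∧ w.length = L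

lemma walk_parity {V : Type*} (G : SimpleGraph V) (f : V → ZMod 2)
    (hf : ∀ u v, G.Adj u v → f u ≠ f v) :
    ∀ {u v : V} (w : G.Walk u v), f v = f u + w.length := by
  intro u v w
  induction w with
  | nil => simp
  | cons h w ih =>
    rename_i a b c
    have hb : f b = f a + 1 := by
      have := hf a b h
      revert this
      generalize f a = x; generalize f b = y
      revert x y; decide
    rw [ih, hb, SimpleGraph.Walk.length_cons]
    push_cast
    ring

lemma no_odd_cycle {V : Type*} (G : SimpleGraph V) (f : V → ZMod 2)
    (hf : ∀ u v, G.Adj u v → f u ≠ f v) {L : ℕ} (hL : Odd L) :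
    ¬ hasCycleLength G L := by
  rintro ⟨v, w, hc, hlen⟩
  have := walk_parity G f hf w
  rw [hlen, left_eq_add] at this
  rw [ZMod.natCast_eq_zero_iff] at this
  exact (Nat.not_even_iff_odd.mpr hL) (even_iff_two_dvd.mpr this)

lemma walk_const {V : Type*} (G : SimpleGraph V) (p : V → ℕ)
    (hp : ∀ u v, G.Adj u v → p u = p v) :
    ∀ {u v : V} (w : G.Walk u v), ∀ x ∈ w.support, p x = p u := by
  intro u v w
  induction w with
  | nil => intro x hx; simp at hx; subst hx; rfl
  | cons h w ih =>
    rename_i a b c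
    intro x hx
    rw [SimpleGraph.Walk.support_cons] at hx
    rcases List.mem_cons.mp hx with h' | h'
    · subst h'; rfl
    · rw [ih x h']; exact (hp a b h).symm

theorem ramsey_three_odd_cycles_lower
    (m1 m2 m3 : ℕ) (h1 : Odd m1) (h2 : Odd m2) (h3 : Odd m3)
    (h12 : m2 ≤ m1) (h23 : m3 ≤ m2) (h3' : 3 ≤ m3) :
    ∃ C : Sym2 (Fin (4 * m1 - 4)) → Fin 3,
      ¬ hasCycleLength (colorGraph C 0) m1 ∧
      ¬ hasCycleLength (colorGraph C 1) m2 ∧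
      ¬ hasCycleLength (colorGraph C 2) m3 := by
  have hm1 : 3 ≤ m1 := le_trans h3' (le_trans h23 h12)
  set d := m1 - 1 with hd
  have hd0 : 0 < d := by omega
  set n := 4 * m1 - 4 with hn
  have hnd : n = 4 * d := by omega
  -- part of a vertex
  set p : Fin n → ℕ := fun v => (v : ℕ) / d with hpdef
  have hp3 : ∀ v : Fin n, p v ≤ 3 := by
    intro v
    show (v : ℕ) / d ≤ 3
    have : (v : ℕ) < 4 * d := by rw [← hnd]; exact v.isLt
    have := Nat.div_lt_iff_lt_mul hd0 |>.mpr (by omega : (v : ℕ) < 4 * d)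
    omega
  set col : ℕ → ℕ → Fin 3 := fun a b =>
    if a = b then 0 else if a + 1 = b ∨ b + 1 = a then 1 else 2 with hcol
  have hsymm : ∀ a b, col a b = col b a := by
    intro a b
    simp only [hcol]
    by_cases h : a = b
    · subst h; simp
    · rw [if_neg h, if_neg (Ne.symm h)]
      by_cases h2 : a + 1 = b ∨ b + 1 = a
      · rw [if_pos h2, if_pos (Or.symm h2)]
      · rw [if_neg h2, if_neg (fun h3 => h2 (Or.symm h3))]
  set Cf : Sym2 (Fin n) → Fin 3 := Sym2.lift ⟨fun u v => col (p u) (p v), fun u v => hsymm _ _⟩ with hCf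
  refine ⟨Cf, ?_, ?_, ?_⟩
  · -- color 0 : same part
    rintro ⟨v, w, hc, hlen⟩
    have hadj : ∀ u x : Fin n, (colorGraph Cf 0).Adj u x → p u = p x := by
      intro u x h
      obtain ⟨hne, hcval⟩ := h
      rw [hCf, Sym2.lift_mk] at hcval
      by_contra hne'
      simp only [hcol, if_neg hne'] at hcval
      split at hcval <;> exact absurd hcval (by decide)
    have hsupp := walk_const _ p hadj w
    -- all vertices in support have same part; m1 distinct vertices in a part of size d = m1-1
    have hnodup := hc.2
    have htail_len : w.support.tail.length = m1 := by
      have := SimpleGraph.Walk.length_support w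
      simp [List.length_tail, this, hlen]
    set g : Fin n → ℕ := fun x => (x : ℕ) % d with hg
    have hmapnodup : (w.support.tail.map g).Nodup := by
      refine List.Nodup.map_on ?_ hnodup
      intro x hx y hy hxy
      have hx' : p x = p v := hsupp x (List.mem_of_mem_tail hx)
      have hy' : p y = p v := hsupp y (List.mem_of_mem_tail hy)
      have : (x : ℕ) = (y : ℕ) := by
        have hx'' : (x : ℕ) / d = (v : ℕ) / d := hx'
        have hy'' : (y : ℕ) / d = (v : ℕ) / d := hy'
        have hxy' : (x : ℕ) % d = (y : ℕ) % d := hxy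
        conv_lhs => rw [← Nat.div_add_mod (x : ℕ) d]
        conv_rhs => rw [← Nat.div_add_mod (y : ℕ) d]
        rw [hx'', hy'', hxy']
      exact Fin.ext this
    have hsub : (w.support.tail.map g).toFinset ⊆ Finset.range d := by
      intro a ha
      rw [List.mem_toFinset] at ha
      obtain ⟨x, _, rfl⟩ := List.mem_map.mp ha
      exact Finset.mem_range.mpr (Nat.mod_lt _ hd0)
    have hcard := Finset.card_le_card hsub
    rw [List.toFinset_card_of_nodup hmapnodup, List.length_map, htail_len,
      Finset.card_range] at hcard
    omega
  · -- color 1 : parts differ by 1, bipartite via parity of part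
    refine no_odd_cycle _ (fun v => (p v : ZMod 2)) ?_ h2
    intro u x h
    obtain ⟨hne, hcval⟩ := h
    rw [hCf, Sym2.lift_mk] at hcval
    simp only [hcol] at hcval
    split at hcval
    · exact absurd hcval (by decide)
    · split at hcval
      · rename_i h1' h2'
        intro heq
        have heq' : ((p u : ℕ) : ZMod 2) = ((p x : ℕ) : ZMod 2) := heq
        rcases h2' with h' | h'
        · have hth : ((p u + 1 : ℕ) : ZMod 2) = ((p x : ℕ) : ZMod 2) := by rw [h']
          push_cast at hth
          rw [heq'] at hth
          simp at hth
        · have hth : ((p x + 1 : ℕ) : ZMod 2) = ((p u : ℕ) : ZMod 2) := by rw [h']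
          push_cast at hth
          rw [← heq'] at hth
          simp at hth
      · exact absurd hcval (by decide)
  · -- color 2 : parts among {0,2},{1,3},{0,3}, bipartite via part ≤ 1
    refine no_odd_cycle _ (fun v => if p v ≤ 1 then (0 : ZMod 2) else 1) ?_ h3
    intro u x h
    obtain ⟨hne, hcval⟩ := h
    rw [hCf, Sym2.lift_mk] at hcval
    simp only [hcol] at hcval
    split at hcval
    · exact absurd hcval (by decide)
    · split at hcval
      · exact absurd hcval (by decide)
      · rename_i hne' hne2
        have hu3 := hp3 u
        have hx3 := hp3 x
        have : (p u ≤ 1 ∧ ¬ p x ≤ 1) ∨ (¬ p u ≤ 1 ∧ p x ≤ 1) := by omega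
        rcases this with ⟨ha, hb⟩ | ⟨ha, hb⟩ <;> simp [ha, hb]
end

section
/- Let m1, m2 ≥ 4 be even integers and let m3 ≥ 3 be an odd integer. Then there exists a coloring of the edges of the complete graph on m1/2 + m2/2 + m3 − 3 vertices with three colors such that color 1 contains no cycle of length m1, color 2 contains no cycle of length m2, and color 3 contains no cycle of length m3. (Construction: partition the vertex set into V1, V2, V3 with |V1| = m1/2 − 1, |V2| = m2/2 − 1, |V3| = m3 − 1; color all edges inside V3 with color 3, all edges with at least one endpoint in V2 with color 2, and all remaining edges with color 1; then color 1 has no cycle longer than m1 − 2, color 2 no cycle longer than m2 − 2, and color 3 no cycle longer than m3 − 1.) -/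
open SimpleGraph

private lemma chain_count_aux {α : Type*} (p : α → Bool) :
    ∀ l : List α, List.Chain' (fun a b => p a = true ∨ p b = true) l →
      (l.countP (fun x => !p x) ≤ l.countP p + 1 ∧
       ∀ a, l.head? = some a → p a = true →
        l.countP (fun x => !p x) ≤ l.countP p)
  | [], _ => by simp
  | [a], _ => by
      by_cases h : p a = true <;>
      simp [List.countP_cons, h]
  | a :: b :: t, hc => by
      simp only [List.Chain', List.isChain_cons_cons] at hc
      obtain ⟨hab, ht⟩ := hc
      obtain ⟨IH1, IH2⟩ := chain_count_aux p (b :: t) ht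
      have e1 : (a :: b :: t).countP p
          = (b :: t).countP p + (if p a = true then 1 else 0) :=
        List.countP_cons
      have e2 : (a :: b :: t).countP (fun x => !p x)
          = (b :: t).countP (fun x => !p x) + (if p a = false then 1 else 0) := by
        rw [List.countP_cons]
        cases h : p a <;> simp [h]
      by_cases ha : p a = true
      · have i1 : (if p a = true then 1 else 0) = 1 := if_pos ha
        have i2 : (if p a = false then 1 else 0) = 0 := by simp [ha]
        constructor
        · rw [e1, e2, i1, i2]
          omega
        · intro x hx hpx
          rw [e1, e2, i1, i2]
          omega
      · have hb : p b = true := by tauto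
        have IH2' := IH2 b rfl hb
        have i1 : (if p a = true then 1 else 0) = 0 := if_neg ha
        have i2 : (if p a = false then 1 else 0) = 1 := by
          rw [Bool.not_eq_true] at ha; simp [ha]
        constructor
        · rw [e1, e2, i1, i2]
          omega
        · intro x hx hpx
          simp only [List.head?_cons, Option.some.injEq] at hx
          subst hx
          exact absurd hpx ha

private lemma cycle_length_le {V : Type*} {G : SimpleGraph V} (p : V → Bool)
    (hG : ∀ u v : V, G.Adj u v → p u = true ∨ p v = true)
    {v : V} (w : G.Walk v v) (hw : w.IsCycle) :
    w.length ≤ 2 * w.support.tail.countP p + 1 := by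
  have hchain : List.Chain' (fun a b => p a = true ∨ p b = true) w.support :=
    (w.isChain_adj_support).imp (fun a b h => hG a b h)
  have hsup := w.support_eq_cons
  have hlen : w.support.tail.length = w.length := by
    have h := w.length_support
    rw [hsup] at h
    simpa using h
  have hsum : w.support.tail.countP p + w.support.tail.countP (fun x => !p x)
      = w.length := by
    have := List.length_eq_countP_add_countP p (l := w.support.tail)
    rw [hlen] at this
    rw [this]
    congr 1
    apply List.countP_congr
    intro x _
    cases p x <;> simp
  obtain ⟨h1aux, h2aux⟩ := chain_count_aux p w.support hchain
  have e1 : (v :: w.support.tail).countP p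
      = w.support.tail.countP p + (if p v = true then 1 else 0) :=
    List.countP_cons
  have e2 : (v :: w.support.tail).countP (fun x => !p x)
      = w.support.tail.countP (fun x => !p x) + (if p v = false then 1 else 0) := by
    rw [List.countP_cons]
    cases h : p v <;> simp [h]
  by_cases hv : p v = true
  · have h := h2aux v (by rw [hsup]; rfl) hv
    have i1 : (if p v = true then 1 else 0) = 1 := if_pos hv
    have i2 : (if p v = false then 1 else 0) = 0 := by simp [hv]
    rw [hsup, e1, e2, i1, i2] at h
    omega
  · have i1 : (if p v = true then 1 else 0) = 0 := if_neg hv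
    have i2 : (if p v = false then 1 else 0) = 1 := by
      rw [Bool.not_eq_true] at hv; simp [hv]
    rw [hsup, e1, e2, i1, i2] at h1aux
    omega

private lemma countP_le_of_inj {n : ℕ} (p : Fin n → Bool) (l : List (Fin n))
    (hl : l.Nodup) (c : ℕ) (f : Fin n → ℕ)
    (hf : ∀ i, p i = true → f i < c)
    (hinj : ∀ i j, p i = true → p j = true → f i = f j → i = j) :
    l.countP p ≤ c := by
  rw [List.countP_eq_length_filter]
  have hnd : (l.filter p).Nodup := hl.filter p
  rw [← List.toFinset_card_of_nodup hnd]
  calc (l.filter p).toFinset.card ≤ (Finset.range c).card := by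
        apply Finset.card_le_card_of_injOn f
        · intro a ha
          rw [Finset.mem_coe, List.mem_toFinset, List.mem_filter] at ha
          exact Finset.mem_range.mpr (hf a ha.2)
        · intro i hi j hj hij
          rw [Finset.mem_coe, List.mem_toFinset, List.mem_filter] at hi hj
          exact hinj i j hi.2 hj.2 hij
    _ = c := Finset.card_range c

private lemma walk_support_p {V : Type*} {G : SimpleGraph V} (p : V → Bool)
    (hG : ∀ u v : V, G.Adj u v → p u = true ∧ p v = true) :
    ∀ {u v : V} (w : G.Walk u v), ∀ x ∈ w.support, x = u ∨ p x = true := by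
  intro u v w
  induction w with
  | nil => simp
  | cons h q ih =>
    intro x hx
    rw [Walk.support_cons] at hx
    rcases List.mem_cons.mp hx with rfl | hx
    · exact Or.inl rfl
    · rcases ih x hx with rfl | hpx
      · exact Or.inr (hG _ _ h).2
      · exact Or.inr hpx

theorem ramsey_two_even_one_odd_cycles_lower_two
    (m1 m2 m3 : ℕ) (h1 : Even m1) (h2 : Even m2) (h3 : Odd m3)
    (h1' : 4 ≤ m1) (h2' : 4 ≤ m2) (h3' : 3 ≤ m3) :
    ∃ C : Sym2 (Fin (m1 / 2 + m2 / 2 + m3 - 3)) → Fin 3,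
      ¬ hasCycleLength (colorGraph C 0) m1 ∧
      ¬ hasCycleLength (colorGraph C 1) m2 ∧
      ¬ hasCycleLength (colorGraph C 2) m3 := by
  rw [Nat.even_iff] at h1 h2
  rw [Nat.odd_iff] at h3
  set n := m1 / 2 + m2 / 2 + m3 - 3 with hn
  set a := m1 / 2 - 1 with ha
  set b := m2 / 2 - 1 with hb
  set c := m3 - 1 with hc
  have hm1 : m1 = 2 * a + 2 := by omega
  have hm2 : m2 = 2 * b + 2 := by omega
  have hm3 : m3 = c + 1 := by omega
  have hnabc : n = a + b + c := by omega
  set f : Fin n → Fin n → Fin 3 := fun u v =>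
    if a + b ≤ u.val ∧ a + b ≤ v.val then 2
    else if (a ≤ u.val ∧ u.val < a + b) ∨ (a ≤ v.val ∧ v.val < a + b) then 1
    else 0 with hf
  have hsymm : ∀ u v : Fin n, f u v = f v u := by
    intro u v
    simp only [hf]
    split_ifs <;> first | rfl | tauto
  refine ⟨Sym2.lift ⟨f, hsymm⟩, ?_, ?_, ?_⟩
  · -- color 0 : no cycle of length m1
    rintro ⟨v, w, hw, hwl⟩
    have hG : ∀ u v : Fin n, (colorGraph (Sym2.lift ⟨f, hsymm⟩) 0).Adj u v →
        (decide (u.val < a)) = true ∨ (decide (v.val < a)) = true := by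
      intro u v huv
      obtain ⟨_, hC⟩ := huv
      rw [Sym2.lift_mk] at hC
      simp only [hf] at hC
      have hu := u.isLt
      have hv := v.isLt
      split_ifs at hC with hc1 hc2
      · exact absurd hC (by decide)
      · exact absurd hC (by decide)
      · push_neg at hc1 hc2
        simp only [decide_eq_true_eq]
        omega
    have hle := cycle_length_le _ hG w hw
    have hcount : w.support.tail.countP (fun x => decide (x.val < a)) ≤ a := by
      apply countP_le_of_inj _ _ hw.2 a (fun i => i.val)
      · intro i hi
        simpa using hi
      · intro i j _ _ hij
        exact Fin.ext hij
    omega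
  · -- color 1 : no cycle of length m2
    rintro ⟨v, w, hw, hwl⟩
    have hG : ∀ u v : Fin n, (colorGraph (Sym2.lift ⟨f, hsymm⟩) 1).Adj u v →
        (decide (a ≤ u.val ∧ u.val < a + b)) = true ∨
        (decide (a ≤ v.val ∧ v.val < a + b)) = true := by
      intro u v huv
      obtain ⟨_, hC⟩ := huv
      rw [Sym2.lift_mk] at hC
      simp only [hf] at hC
      split_ifs at hC with hc1 hc2
      · exact absurd hC (by decide)
      · simp only [decide_eq_true_eq]
        tauto
      · exact absurd hC (by decide)
    have hle := cycle_length_le _ hG w hw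
    have hcount : w.support.tail.countP
        (fun x => decide (a ≤ x.val ∧ x.val < a + b)) ≤ b := by
      apply countP_le_of_inj _ _ hw.2 b (fun i => i.val - a)
      · intro i hi
        simp only [decide_eq_true_eq] at hi
        omega
      · intro i j hi hj hij
        simp only [decide_eq_true_eq] at hi hj
        exact Fin.ext (by omega)
    omega
  · -- color 2 : no cycle of length m3
    rintro ⟨v, w, hw, hwl⟩
    have hG : ∀ u v : Fin n, (colorGraph (Sym2.lift ⟨f, hsymm⟩) 2).Adj u v →
        (decide (a + b ≤ u.val)) = true ∧ (decide (a + b ≤ v.val)) = true := by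
      intro u v huv
      obtain ⟨_, hC⟩ := huv
      rw [Sym2.lift_mk] at hC
      simp only [hf] at hC
      split_ifs at hC with hc1 hc2
      · simp only [decide_eq_true_eq]
        tauto
      · exact absurd hC (by decide)
      · exact absurd hC (by decide)
    have hall : ∀ x ∈ w.support, (decide (a + b ≤ x.val)) = true := by
      intro x hx
      have h3len : 3 ≤ w.length := hw.three_le_length
      cases w with
      | nil => simp at h3len
      | cons hadj q =>
        rcases walk_support_p _ hG (Walk.cons hadj q) x hx with rfl | hpx
        · exact (hG _ _ hadj).1
        · exact hpx
    have hcount : w.support.tail.countP (fun x => decide (a + b ≤ x.val)) ≤ c := by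
      apply countP_le_of_inj _ _ hw.2 c (fun i => i.val - (a + b))
      · intro i hi
        simp only [decide_eq_true_eq] at hi
        have := i.isLt
        omega
      · intro i j hi hj hij
        simp only [decide_eq_true_eq] at hi hj
        exact Fin.ext (by omega)
    have hcnt_eq : w.support.tail.countP (fun x => decide (a + b ≤ x.val))
        = w.support.tail.length := by
      apply List.countP_eq_length.mpr
      intro x hx
      exact hall x (List.mem_of_mem_tail hx)
    have hlen : w.support.tail.length = w.length := by
      have h := w.length_support
      rw [w.support_eq_cons] at h
      simpa using h
    omega
end

section
/- Let m1 ≥ 4 be an even integer and let m2, m3 be odd integers with m2 ≥ m3 ≥ 3. Then there exists a coloring of the edges of the complete graph on m1 + 2·m2 − 4 vertices with three colors such that color 1 contains no cycle of length m1, color 2 contains no cycle of length m2, and color 3 contains no cycle of length m3. (Construction: partition the vertex set into V1, V2, V3, V4 with |V1| = |V2| = m1/2 − 1 and |V3| = |V4| = m2 − 1; color the edges inside V1 and inside V2 and the edges between V1 and V3 and between V2 and V4 with color 1, the edges inside V3 and inside V4 with color 2, and all remaining edges with color 3; then every cycle in color 1 has length at most m1 − 2, every cycle in color 2 has length at most m2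 − 1, and color 3 is bipartite, hence has no odd cycle.) -/
open SimpleGraph

namespace RamseyLowerTwoAux

def gg : Fin 4 → ZMod 2 := ![0, 1, 0, 1]

def p : Fin 4 → Fin 4 → Fin 3 :=
  ![![0,2,0,2], ![2,0,2,0], ![0,2,1,2], ![2,0,2,1]]

lemma p_symm : ∀ r s, p r s = p s r := by decide
lemma p0_gg : ∀ r s, p r s = 0 → gg r = gg s := by decide
lemma p0_two : ∀ r s, p r s = 0 → r = 2 → s = 0 := by decide
lemma p0_three : ∀ r s, p r s = 0 → r = 3 → s = 1 := by decide
lemma p1_eq : ∀ r s, p r s = 1 → r = s ∧ (r = 2 ∨ r = 3) := by decide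
lemma p2_gg : ∀ r s, p r s = 2 → gg s = gg r + 1 := by decide
lemma gg_zero : ∀ r : Fin 4, gg r = 0 → r = 0 ∨ r = 2 := by decide
lemma gg_one : ∀ r : Fin 4, gg r = 1 → r = 1 ∨ r = 3 := by decide
lemma zmod2_cases : ∀ x : ZMod 2, x = 0 ∨ x = 1 := by decide

def reg (a b x : ℕ) : Fin 4 :=
  if x < a then 0 else if x < a + a then 1 else if x < a + a + b then 2 else 3

lemma reg_zero {a b x : ℕ} (h : reg a b x = 0) : x < a := by
  unfold reg at h; split_ifs at h <;> first | assumption | exact absurd h (by decide)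

lemma reg_one {a b x : ℕ} (h : reg a b x = 1) : a ≤ x ∧ x < a + a := by
  unfold reg at h; split_ifs at h <;> first | omega | exact absurd h (by decide)

lemma reg_two {a b x : ℕ} (h : reg a b x = 2) : a + a ≤ x ∧ x < a + a + b := by
  unfold reg at h; split_ifs at h <;> first | omega | exact absurd h (by decide)

lemma reg_three {a b x : ℕ} (h : reg a b x = 3) : a + a + b ≤ x := by
  unfold reg at h; split_ifs at h <;> first | omega | exact absurd h (by decide)

lemma walk_sum {V : Type*} {G : SimpleGraph V} (g : V → ZMod 2)
    (h : ∀ u v, G.Adj u v → g v = g u + 1) {u v : V} (w : G.Walk u v) :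
    g v = g u + w.length := by
  induction w with
  | nil => simp
  | @cons x y z hadj w ih =>
      rw [Walk.length_cons, ih, h _ _ hadj]
      push_cast
      ring

lemma walk_const {V α : Type*} {G : SimpleGraph V} (g : V → α)
    (h : ∀ u v, G.Adj u v → g u = g v) {u v : V} (w : G.Walk u v) :
    ∀ z ∈ w.support, g z = g u := by
  induction w with
  | nil => intro z hz; simp at hz; subst hz; rfl
  | @cons x y z hadj w ih =>
      intro z hz
      rw [Walk.support_cons] at hz
      rcases List.mem_cons.mp hz with rfl | hz
      · rfl
      · rw [ih z hz, ← h _ _ hadj]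

lemma cycle_adj {V : Type*} {G : SimpleGraph V} {v : V} (w : G.Walk v v)
    {i j : ℕ} (hi : i < w.support.tail.length) (hj : j < w.support.tail.length)
    (hij : (i+1) % w.support.tail.length = j) :
    G.Adj (w.support.tail.get ⟨i, hi⟩) (w.support.tail.get ⟨j, hj⟩) := by
  have hchain := List.isChain_iff_getElem.mp w.isChain_adj_support
  have hslen : w.support.length = w.support.tail.length + 1 := by
    rw [List.length_tail]; have := w.length_support; omega
  rw [List.get_tail _ i hi (by omega), List.get_tail _ j hj (by omega)]
  by_cases hcase : i + 1 < w.support.tail.length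
  · have hj' : j = i + 1 := by rw [← hij, Nat.mod_eq_of_lt hcase]
    subst hj'
    exact hchain (i+1) (by omega)
  · have hiL : i + 1 = w.support.tail.length := by omega
    have hj0 : j = 0 := by rw [← hij, hiL, Nat.mod_self]
    subst hj0
    have hlast : w.support.get ⟨i+1, by omega⟩ = v := by
      have h := w.getLast_support
      rw [List.getLast_eq_getElem] at h
      simp only [List.get_eq_getElem]
      convert h using 2
      omega
    have hhead : w.support.get ⟨0, by omega⟩ = v := by
      rw [List.get_mk_zero]
      exact w.head_support
    have hΓ : G.Adj (w.support.get ⟨0, by omega⟩) (w.support.get ⟨0 + 1, by omega⟩) :=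
      hchain 0 (by omega)
    rw [hhead] at hΓ
    rw [hlast]
    exact hΓ

lemma card_filter_le_of_step {V : Type*} (l : List V)
    (P Q : V → Prop) [DecidablePred P] [DecidablePred Q]
    (hstep : ∀ (i j : ℕ) (hi : i < l.length) (hj : j < l.length),
      (i+1) % l.length = j → P (l.get ⟨i, hi⟩) → Q (l.get ⟨j, hj⟩)) :
    (Finset.univ.filter (fun i : Fin l.length => P (l.get i))).card ≤
    (Finset.univ.filter (fun i : Fin l.length => Q (l.get i))).card := by
  rcases Nat.eq_zero_or_pos l.length with h0 | hpos
  · haveI : IsEmpty (Fin l.length) := by rw [h0]; infer_instance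
    simp [Finset.univ_eq_empty]
  haveI : NeZero l.length := ⟨by omega⟩
  apply Finset.card_le_card_of_injOn (fun i => i + 1)
  · intro i hi
    simp only [Finset.coe_filter, Finset.mem_filter, Finset.mem_univ, true_and, Set.mem_setOf_eq] at hi ⊢
    have hmod : ((i : ℕ) + 1) % l.length = ((i + 1 : Fin l.length) : ℕ) := by
      rw [Fin.add_def]
      show ((i:ℕ) + 1) % l.length = ((i:ℕ) + ((1 : Fin l.length):ℕ)) % l.length
      have h1 : ((1 : Fin l.length) : ℕ) = 1 % l.length := rfl
      rw [h1]
      conv_lhs => rw [Nat.add_mod]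
      rw [Nat.mod_eq_of_lt i.isLt]
    have := hstep i (i+1 : Fin l.length) i.isLt (i+1 : Fin l.length).isLt hmod
    simpa using this hi
  · intro i _ j _ h
    simpa using add_right_cancel h

lemma length_le_of_nodup {n : ℕ} (l : List (Fin n)) (hl : l.Nodup) (s : Finset ℕ)
    (h : ∀ x ∈ l, x.val ∈ s) : l.length ≤ s.card := by
  have hnd : (l.map Fin.val).Nodup := hl.map Fin.val_injective
  have : (l.map Fin.val).length ≤ s.card := by
    rw [← List.toFinset_card_of_nodup hnd]
    apply Finset.card_le_card
    intro x hx
    rw [List.mem_toFinset, List.mem_map] at hx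
    obtain ⟨y, hy, rfl⟩ := hx
    exact h y hy
  simpa using this

lemma filter_card_le {n : ℕ} (l : List (Fin n)) (P : Fin n → Prop) [DecidablePred P]
    (hnd : l.Nodup) (s : Finset ℕ) (hP : ∀ x, P x → x.val ∈ s) :
    (Finset.univ.filter fun i : Fin l.length => P (l.get i)).card ≤ s.card := by
  apply Finset.card_le_card_of_injOn (fun i => (l.get i).val)
  · intro i hi
    simp only [Finset.coe_filter, Finset.mem_filter, Finset.mem_univ, true_and, Set.mem_setOf_eq] at hi
    exact hP _ hi
  · intro i _ j _ h
    exact (List.nodup_iff_injective_get.mp hnd) (Fin.val_injective h)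

end RamseyLowerTwoAux

open RamseyLowerTwoAux
theorem ramsey_one_even_two_odd_cycles_lower_two
    (m1 m2 m3 : ℕ) (h1 : Even m1) (h2 : Odd m2) (h3 : Odd m3)
    (h1' : 4 ≤ m1) (h23 : m3 ≤ m2) (h3' : 3 ≤ m3) :
    ∃ C : Sym2 (Fin (m1 + 2 * m2 - 4)) → Fin 3,
      ¬ hasCycleLength (colorGraph C 0) m1 ∧
      ¬ hasCycleLength (colorGraph C 1) m2 ∧
      ¬ hasCycleLength (colorGraph C 2) m3 := by
  obtain ⟨t, ht⟩ := h1
  set a := t - 1 with ha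
  set b := m2 - 1 with hb
  have hm1 : m1 = a + a + 2 := by omega
  have hm2 : 3 ≤ m2 := le_trans h3' h23
  have hn : m1 + 2 * m2 - 4 = a + a + b + b := by omega
  set C : Sym2 (Fin (m1 + 2 * m2 - 4)) → Fin 3 :=
    Sym2.lift ⟨fun u v => p (reg a b u.val) (reg a b v.val),
      fun u v => p_symm _ _⟩ with hCdef
  have hadjP : ∀ (i : Fin 3) (x y : Fin (m1 + 2 * m2 - 4)),
      (colorGraph C i).Adj x y → p (reg a b x.val) (reg a b y.val) = i := by
    intro i x y h
    have h2 := h.2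
    rwa [hCdef, Sym2.lift_mk] at h2
  refine ⟨C, ?_, ?_, ?_⟩
  · -- no cycle of length m1 in color 0
    rintro ⟨v, w, hw, hlen⟩
    set l := w.support.tail with hl
    have hnd : l.Nodup := hw.support_nodup
    have hlL : l.length = m1 := by
      rw [hl, List.length_tail, w.length_support, hlen]
      omega
    have hall : ∀ x ∈ l, gg (reg a b x.val) = gg (reg a b v.val) := fun x hx =>
      walk_const (fun z => gg (reg a b z.val))
        (fun u u' huu => p0_gg _ _ (hadjP 0 u u' huu)) w x (List.tail_subset _ hx)
    rcases zmod2_cases (gg (reg a b v.val)) with hg | hg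
    · -- regions 0 and 2
      have hstep : ∀ (i j : ℕ) (hi : i < l.length) (hj : j < l.length),
          (i+1) % l.length = j → (reg a b (l.get ⟨i, hi⟩).val = 2) →
          reg a b (l.get ⟨j, hj⟩).val = 0 := fun i j hi hj hij hP =>
        p0_two _ _ (hadjP 0 _ _ (cycle_adj w hi hj hij)) hP
      have hle1 := card_filter_le_of_step l
        (fun x => reg a b x.val = 2) (fun x => reg a b x.val = 0) hstep
      have hle2 := filter_card_le l (fun x => reg a b x.val = 0) hnd
        (Finset.range a) (fun x hx => Finset.mem_range.mpr (reg_zero hx))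
      have hsplit := Finset.card_filter_add_card_filter_not
        (s := (Finset.univ : Finset (Fin l.length)))
        (p := fun i => reg a b (l.get i).val = 0)
      have hcongr : (Finset.univ.filter fun i : Fin l.length =>
          ¬ reg a b (l.get i).val = 0) =
          (Finset.univ.filter fun i : Fin l.length => reg a b (l.get i).val = 2) := by
        apply Finset.filter_congr
        intro i _
        have hgg := hall (l.get i) (List.get_mem _ _)
        rw [hg] at hgg
        have h02 := gg_zero _ hgg
        rw [List.get_eq_getElem] at h02
        constructor
        · intro hne
          rcases h02 with h | h
          · exact absurd h hne
          · exact h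
        · intro hr2 hr0
          rw [hr0] at hr2
          exact absurd hr2 (by decide)
      rw [hcongr] at hsplit
      rw [Finset.card_univ, Fintype.card_fin] at hsplit
      have hcr : (Finset.range a).card = a := Finset.card_range a
      beta_reduce at hle1 hle2
      omega
    · -- regions 1 and 3
      have hstep : ∀ (i j : ℕ) (hi : i < l.length) (hj : j < l.length),
          (i+1) % l.length = j → (reg a b (l.get ⟨i, hi⟩).val = 3) →
          reg a b (l.get ⟨j, hj⟩).val = 1 := fun i j hi hj hij hP =>
        p0_three _ _ (hadjP 0 _ _ (cycle_adj w hi hj hij)) hP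
      have hle1 := card_filter_le_of_step l
        (fun x => reg a b x.val = 3) (fun x => reg a b x.val = 1) hstep
      have hle2 := filter_card_le l (fun x => reg a b x.val = 1) hnd
        (Finset.Ico a (a + a)) (fun x hx => Finset.mem_Ico.mpr (reg_one hx))
      have hsplit := Finset.card_filter_add_card_filter_not
        (s := (Finset.univ : Finset (Fin l.length)))
        (p := fun i => reg a b (l.get i).val = 1)
      have hcongr : (Finset.univ.filter fun i : Fin l.length =>
          ¬ reg a b (l.get i).val = 1) =
          (Finset.univ.filter fun i : Fin l.length => reg a b (l.get i).val = 3) := by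
        apply Finset.filter_congr
        intro i _
        have hgg := hall (l.get i) (List.get_mem _ _)
        rw [hg] at hgg
        have h13 := gg_one _ hgg
        rw [List.get_eq_getElem] at h13
        constructor
        · intro hne
          rcases h13 with h | h
          · exact absurd h hne
          · exact h
        · intro hr2 hr0
          rw [hr0] at hr2
          exact absurd hr2 (by decide)
      rw [hcongr] at hsplit
      rw [Finset.card_univ, Fintype.card_fin] at hsplit
      have hcr : (Finset.Ico a (a + a)).card = a + a - a := Nat.card_Ico _ _
      beta_reduce at hle1 hle2
      omega
  · -- no cycle of length m2 in color 1
    rintro ⟨v, w, hw, hlen⟩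
    set l := w.support.tail with hl
    have hnd : l.Nodup := hw.support_nodup
    have hlL : l.length = m2 := by
      rw [hl, List.length_tail, w.length_support, hlen]
      omega
    have hpos : 0 < l.length := by omega
    have hadj0 := cycle_adj w (i := 0) (j := (0+1) % l.length) hpos
      (Nat.mod_lt _ hpos) rfl
    have hr := (p1_eq _ _ (hadjP 1 _ _ hadj0)).2
    have hall : ∀ x ∈ l, reg a b x.val = reg a b v.val := fun x hx =>
      walk_const (fun z => reg a b z.val)
        (fun u u' huu => (p1_eq _ _ (hadjP 1 u u' huu)).1) w x (List.tail_subset _ hx)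
    have hrv : reg a b (l.get ⟨0, hpos⟩).val = reg a b v.val :=
      hall _ (List.get_mem _ _)
    rcases hr with h2r | h3r
    · have hlen2 : l.length ≤ (Finset.Ico (a + a) (a + a + b)).card :=
        length_le_of_nodup l hnd _ (fun x hx => by
          have hx2 : reg a b x.val = 2 := by rw [hall x hx, ← hrv]; exact h2r
          exact Finset.mem_Ico.mpr (reg_two hx2))
      rw [hlL, Nat.card_Ico] at hlen2
      omega
    · have hlen2 : l.length ≤ (Finset.Ico (a + a + b) (a + a + b + b)).card :=
        length_le_of_nodup l hnd _ (fun x hx => by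
          have hx3 : reg a b x.val = 3 := by rw [hall x hx, ← hrv]; exact h3r
          have hlow := reg_three hx3
          have hup : (x : ℕ) < a + a + b + b := by
            have := x.isLt
            omega
          exact Finset.mem_Ico.mpr ⟨hlow, hup⟩)
      rw [hlL, Nat.card_Ico] at hlen2
      omega
  · -- no cycle of length m3 in color 2
    rintro ⟨v, w, hw, hlen⟩
    have hpar := walk_sum (fun z => gg (reg a b z.val))
      (fun u u' huu => p2_gg _ _ (hadjP 2 u u' huu)) w
    have hz : ((w.length : ℕ) : ZMod 2) = 0 := by
      have := hpar.symm
      rwa [add_eq_left] at this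
    rw [hlen, ZMod.natCast_eq_zero_iff] at hz
    obtain ⟨k, hk⟩ := hz
    obtain ⟨k2, hk2⟩ := h3
    omega
end

section
/- Let G = (V, E) be a finite simple graph on n vertices and let α > 0 be a real number. If no non-bipartite connected component of G contains a matching saturating at least α·n vertices, then there exists a partition V = V′ ∪ V″ such that: (i) G contains no edges between V′ and V″; (ii) the subgraph G[V′] induced by V′ is bipartite; and (iii) the subgraph G[V″] induced by V″ has at most 0.5·α·n·|V″| edges. -/
open SimpleGraph
open Function

lemma matching_deleteVerts {W : Type*} {H : SimpleGraph W} {M : H.Subgraph}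
    (hM : M.IsMatching) {a b : W} (hab : M.Adj a b) :
    (M.deleteVerts {a, b}).IsMatching := by
  intro v hv
  rw [Subgraph.deleteVerts_verts] at hv
  obtain ⟨hvS, hvab⟩ := hv
  obtain ⟨w, hw, hwu⟩ := hM hvS
  have hwS : w ∈ M.verts := M.edge_vert hw.symm
  have hwa : w ≠ a := by
    rintro rfl
    exact hvab (by simp [(hM (M.edge_vert hab)).unique hw.symm hab])
  have hwb : w ≠ b := by
    rintro rfl
    exact hvab (by simp [(hM (M.edge_vert hab.symm)).unique hw.symm hab.symm])
  refine ⟨w, ?_, ?_⟩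
  · show (M.deleteVerts {a, b}).Adj v w
    rw [Subgraph.deleteVerts_adj]
    refine ⟨hvS, hvab, hwS, by simp [hwa, hwb], hw⟩
  · rintro y hy
    have : (M.deleteVerts {a, b}).Adj v y := hy
    rw [Subgraph.deleteVerts_adj] at this
    exact hwu y this.2.2.2.2

lemma exists_max_matching {W : Type*} [Fintype W] (H : SimpleGraph W) :
    ∃ M : H.Subgraph, M.IsMatching ∧
      ∀ M' : H.Subgraph, M'.IsMatching → M'.verts.ncard ≤ M.verts.ncard := by
  classical
  set K : Set ℕ := {k | ∃ M : H.Subgraph, M.IsMatching ∧ M.verts.ncard = k} with hK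
  have h0 : 0 ∈ K := ⟨⊥, fun v hv => by simp [Subgraph.verts_bot] at hv, by simp⟩
  have hbdd : BddAbove K := by
    refine ⟨Fintype.card W, fun k hk => ?_⟩
    obtain ⟨M, -, rfl⟩ := hk
    simpa [Set.ncard_univ] using Set.ncard_le_ncard (Set.subset_univ M.verts) Set.finite_univ
  obtain ⟨M, hM, hMc⟩ := Nat.sSup_mem ⟨0, h0⟩ hbdd
  exact ⟨M, hM, fun M' hM' => hMc ▸ le_csSup hbdd ⟨M', hM', rfl⟩⟩

lemma key_matching_bound {W : Type*} [Fintype W] (H : SimpleGraph W) :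
    ∃ M : H.Subgraph, M.IsMatching ∧
      {p : W × W | H.Adj p.1 p.2}.ncard ≤ M.verts.ncard * Fintype.card W := by
  classical
  obtain ⟨M, hM, hmax⟩ := exists_max_matching H
  refine ⟨M, hM, ?_⟩
  -- Claim A : every edge touches M.verts
  have claimA : ∀ u v : W, H.Adj u v → u ∈ M.verts ∨ v ∈ M.verts := by
    intro u v huv
    by_contra hc
    push_neg at hc
    obtain ⟨hu, hv⟩ := hc
    have hdisj : Disjoint M.verts ({u, v} : Set W) := by
      rw [Set.disjoint_iff]
      rintro x ⟨hx1, hx2⟩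
      rcases hx2 with rfl | rfl
      exacts [hu hx1, hv hx1]
    have hd : Disjoint M.support (H.subgraphOfAdj huv).support := by
      rw [hM.support_eq_verts, (Subgraph.IsMatching.subgraphOfAdj huv).support_eq_verts]
      simpa using hdisj
    have hM2 := hM.sup (Subgraph.IsMatching.subgraphOfAdj huv) hd
    have hc2 := hmax _ hM2
    rw [Subgraph.verts_sup, subgraphOfAdj_verts,
      Set.ncard_union_eq hdisj (Set.toFinite _) (Set.toFinite _),
      Set.ncard_pair huv.ne] at hc2
    omega
  -- Claim B : no augmenting path of length 3
  have claimB : ∀ a b u u' : W, M.Adj a b → u ∉ M.verts → u' ∉ M.verts → u ≠ u' →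
      H.Adj a u → H.Adj b u' → False := by
    intro a b u u' hab hu hu' huu' hau hbu'
    have haS : a ∈ M.verts := M.edge_vert hab
    have hbS : b ∈ M.verts := M.edge_vert hab.symm
    have hne : a ≠ b := (M.adj_sub hab).ne
    have hdisj1 : Disjoint (M.verts \ {a, b}) ({a, u} : Set W) := by
      rw [Set.disjoint_iff]
      rintro x ⟨⟨hx1, hx2⟩, hx3⟩
      rcases hx3 with rfl | rfl
      · exact hx2 (Or.inl rfl)
      · exact hu hx1
    have hdisj2 : Disjoint ((M.verts \ {a, b}) ∪ {a, u}) ({b, u'} : Set W) := by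
      rw [Set.disjoint_iff]
      rintro x ⟨hx1, hx3⟩
      rcases hx3 with rfl | rfl
      · rcases hx1 with ⟨-, hx2⟩ | (rfl | rfl)
        · exact hx2 (Or.inr rfl)
        · exact hne rfl
        · exact hu hbS
      · rcases hx1 with ⟨hx1, -⟩ | (rfl | rfl)
        · exact hu' hx1
        · exact hu' haS
        · exact huu' rfl
    have hd1 : Disjoint (M.deleteVerts {a, b}).support (H.subgraphOfAdj hau).support := by
      rw [(matching_deleteVerts hM hab).support_eq_verts,
        (Subgraph.IsMatching.subgraphOfAdj hau).support_eq_verts,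
        Subgraph.deleteVerts_verts]
      simpa using hdisj1
    have hMd := (matching_deleteVerts hM hab).sup (Subgraph.IsMatching.subgraphOfAdj hau) hd1
    have hd2 : Disjoint ((M.deleteVerts {a, b}) ⊔ H.subgraphOfAdj hau).support
        (H.subgraphOfAdj hbu').support := by
      rw [hMd.support_eq_verts, (Subgraph.IsMatching.subgraphOfAdj hbu').support_eq_verts,
        Subgraph.verts_sup, Subgraph.deleteVerts_verts]
      simpa using hdisj2
    have hM3 := hMd.sup (Subgraph.IsMatching.subgraphOfAdj hbu') hd2
    have hc3 := hmax _ hM3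
    have hk2 : 2 ≤ M.verts.ncard := by
      have h := Set.ncard_le_ncard
        (Set.insert_subset haS (Set.singleton_subset_iff.2 hbS)) (Set.toFinite _)
      rwa [Set.ncard_pair hne] at h
    have hau' : a ≠ u := fun h => hu (h ▸ haS)
    have hbu'' : b ≠ u' := fun h => hu' (h ▸ hbS)
    rw [Subgraph.verts_sup, Subgraph.verts_sup, Subgraph.deleteVerts_verts,
      subgraphOfAdj_verts, subgraphOfAdj_verts,
      Set.ncard_union_eq hdisj2 (Set.toFinite _) (Set.toFinite _),
      Set.ncard_union_eq hdisj1 (Set.toFinite _) (Set.toFinite _),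
      Set.ncard_diff (by rintro x (rfl | rfl); exacts [haS, hbS]),
      Set.ncard_pair hne, Set.ncard_pair hau', Set.ncard_pair hbu''] at hc3
    omega
  -- Counting
  set S : Finset W := M.verts.toFinset with hS
  have hSn : M.verts.ncard = S.card := Set.ncard_eq_toFinset_card' _
  set n := Fintype.card W with hn'
  set A : Finset (W × W) := Finset.univ.filter (fun p : W × W => H.Adj p.1 p.2) with hA
  have hgoal : {p : W × W | H.Adj p.1 p.2}.ncard = A.card := by
    rw [Set.ncard_eq_toFinset_card', Set.toFinset_setOf]
  rw [hgoal, hSn]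
  set U : Finset W := Sᶜ with hU
  -- the partner function
  set pf : W → W := fun v => if h : v ∈ M.verts then (hM h).choose else v with hpf
  have hpf1 : ∀ v, ∀ h : v ∈ M.verts, M.Adj v (pf v) := by
    intro v h
    simp only [hpf, dif_pos h]
    exact (hM h).choose_spec.1
  have hpf2 : ∀ v w, M.Adj v w → pf v = w := by
    intro v w hvw
    have h := M.edge_vert hvw
    simp only [hpf, dif_pos h]
    exact ((hM h).choose_spec.2 w hvw).symm
  set t : Finset (Sym2 W) := M.edgeSet.toFinset with ht
  set f : W × W → Sym2 W := fun p => s(p.1, pf p.1) with hf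
  set ASS : Finset (W × W) := A.filter (fun p => p.1 ∈ S ∧ p.2 ∈ S) with hASS
  set ASU : Finset (W × W) := A.filter (fun p => p.1 ∈ S ∧ p.2 ∉ S) with hASU
  set AUS : Finset (W × W) := A.filter (fun p => p.1 ∉ S ∧ p.2 ∈ S) with hAUS
  have hsplit : A.card ≤ ASS.card + (ASU.card + AUS.card) := by
    refine le_trans (Finset.card_le_card (fun p hp => ?_)) (le_trans (Finset.card_union_le _ _)
      (by gcongr <;> exact Finset.card_union_le _ _))
    have hadj : H.Adj p.1 p.2 := by
      simp only [hA, Finset.mem_filter, Finset.mem_univ, true_and] at hp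
      exact hp
    have hca := claimA _ _ hadj
    simp only [Finset.mem_union, hASS, hASU, hAUS, Finset.mem_filter, hS, Set.mem_toFinset]
    by_cases h1 : p.1 ∈ M.verts <;> by_cases h2 : p.2 ∈ M.verts <;> tauto
  have hswap : AUS.card = ASU.card := by
    refine Finset.card_bij' (fun p _ => (p.2, p.1)) (fun p _ => (p.2, p.1)) ?_ ?_ ?_ ?_
    · intro p hp
      simp only [hAUS, hASU, hA, Finset.mem_filter, Finset.mem_univ, true_and] at hp ⊢
      exact ⟨hp.1.symm, hp.2.2, hp.2.1⟩
    · intro p hp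
      simp only [hAUS, hASU, hA, Finset.mem_filter, Finset.mem_univ, true_and] at hp ⊢
      exact ⟨hp.1.symm, hp.2.2, hp.2.1⟩
    · intro p _; rfl
    · intro p _; rfl
  have hASSb : ASS.card ≤ S.card * S.card - S.card := by
    rw [← Finset.offDiag_card]
    refine Finset.card_le_card (fun p hp => ?_)
    simp only [hASS, hA, Finset.mem_filter, Finset.mem_univ, true_and] at hp
    exact Finset.mem_offDiag.2 ⟨hp.2.1, hp.2.2, hp.1.ne⟩
  have hmemt : ∀ p ∈ ASU, f p ∈ t := by
    intro p hp
    simp only [hASU, hA, Finset.mem_filter, Finset.mem_univ, true_and, hS,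
      Set.mem_toFinset] at hp
    simp only [ht, hf, Set.mem_toFinset, Subgraph.mem_edgeSet]
    exact hpf1 _ hp.2.1
  have hfib : ASU.card = ∑ m ∈ t, (ASU.filter (fun p => f p = m)).card :=
    Finset.card_eq_sum_card_fiberwise hmemt
  have hfibbound : ∀ m ∈ t, (ASU.filter (fun p => f p = m)).card ≤ U.card + 1 := by
    intro m hm
    induction m using Sym2.ind with
    | _ a b =>
    rw [ht, Set.mem_toFinset, Subgraph.mem_edgeSet] at hm
    set F := ASU.filter (fun p => f p = s(a, b)) with hF
    have hmemF : ∀ p ∈ F, (p.1 = a ∨ p.1 = b) ∧ H.Adj p.1 p.2 ∧ p.2 ∉ M.verts := by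
      intro p hp
      simp only [hF, hASU, hA, Finset.mem_filter, Finset.mem_univ, true_and, hS,
        Set.mem_toFinset] at hp
      obtain ⟨⟨hadj, -, h2⟩, hfp⟩ := hp
      refine ⟨?_, hadj, h2⟩
      rw [hf] at hfp
      rw [Sym2.eq_iff] at hfp
      tauto
    have hBF : ∀ p ∈ F, ∀ q ∈ F, p.1 ≠ q.1 → p.2 = q.2 := by
      intro p hp q hq hne12
      obtain ⟨hp1, hpadj, hp2⟩ := hmemF p hp
      obtain ⟨hq1, hqadj, hq2⟩ := hmemF q hq
      by_contra hne2
      rcases hp1 with hpa | hpb <;> rcases hq1 with hqa | hqb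
      · exact hne12 (hpa.trans hqa.symm)
      · exact claimB a b p.2 q.2 hm hp2 hq2 hne2 (hpa ▸ hpadj) (hqb ▸ hqadj)
      · exact claimB b a p.2 q.2 hm.symm hp2 hq2 hne2 (hpb ▸ hpadj) (hqa ▸ hqadj)
      · exact hne12 (hpb.trans hqb.symm)
    by_cases hex : ∃ p ∈ F, ∃ q ∈ F, p.1 ≠ q.1
    · obtain ⟨p0, hp0, q0, hq0, hne0⟩ := hex
      have hall : ∀ r ∈ F, r.2 = p0.2 := by
        intro r hr
        by_cases hr1 : r.1 = p0.1
        · rw [hBF r hr q0 hq0 (hr1 ▸ hne0), ← hBF p0 hp0 q0 hq0 hne0]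
        · exact hBF r hr p0 hp0 hr1
      have hsub : F ⊆ ({a, b} : Finset W) ×ˢ {p0.2} := by
        intro r hr
        obtain ⟨hr1, -, -⟩ := hmemF r hr
        rw [Finset.mem_product]
        constructor
        · simp only [Finset.mem_insert, Finset.mem_singleton]; exact hr1
        · simp [hall r hr]
      have hc := Finset.card_le_card hsub
      have hcard2 : (({a, b} : Finset W) ×ˢ ({p0.2} : Finset W)).card ≤ 2 := by
        rw [Finset.card_product, Finset.card_singleton, mul_one]
        exact Finset.card_insert_le _ _
      have hU1 : 1 ≤ U.card := by
        refine Finset.card_pos.2 ⟨p0.2, ?_⟩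
        simp only [hU, Finset.mem_compl, hS, Set.mem_toFinset]
        exact (hmemF p0 hp0).2.2
      omega
    · push_neg at hex
      have hcard : F.card ≤ U.card := by
        refine Finset.card_le_card_of_injOn (fun p => p.2) ?_ ?_
        · intro p hp
          simp only [hU, Finset.mem_coe, Finset.mem_compl, hS, Set.mem_toFinset]
          exact (hmemF p hp).2.2
        · intro p hp q hq h2
          exact Prod.ext (hex p hp q hq) h2
      omega
  have hSt : S.card = 2 * t.card := by
    have hfib2 : S.card = ∑ m ∈ t, (S.filter (fun v => s(v, pf v) = m)).card := by
      refine Finset.card_eq_sum_card_fiberwise (fun v hv => ?_)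
      simp only [Finset.mem_coe, hS, Set.mem_toFinset] at hv
      simp only [ht, Finset.mem_coe, Set.mem_toFinset, Subgraph.mem_edgeSet]
      exact hpf1 _ hv
    have hfib3 : ∀ m ∈ t, (S.filter (fun v => s(v, pf v) = m)).card = 2 := by
      intro m hm
      induction m using Sym2.ind with
      | _ a b =>
      rw [ht, Set.mem_toFinset, Subgraph.mem_edgeSet] at hm
      have hne : a ≠ b := (M.adj_sub hm).ne
      have : S.filter (fun v => s(v, pf v) = s(a, b)) = {a, b} := by
        ext v
        simp only [Finset.mem_filter, hS, Set.mem_toFinset, Finset.mem_insert,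
          Finset.mem_singleton]
        constructor
        · rintro ⟨-, hv⟩
          rw [Sym2.eq_iff] at hv
          tauto
        · rintro (rfl | rfl)
          · exact ⟨M.edge_vert hm, by rw [hpf2 _ _ hm]⟩
          · refine ⟨M.edge_vert hm.symm, ?_⟩
            rw [hpf2 _ _ hm.symm, Sym2.eq_swap]
      rw [this, Finset.card_pair hne]
    rw [hfib2, Finset.sum_congr rfl hfib3, Finset.sum_const, smul_eq_mul, mul_comm]
  have hASUb : ASU.card ≤ t.card * (U.card + 1) := by
    rw [hfib]
    calc ∑ m ∈ t, (ASU.filter (fun p => f p = m)).card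
        ≤ ∑ _m ∈ t, (U.card + 1) := Finset.sum_le_sum hfibbound
      _ = t.card * (U.card + 1) := by rw [Finset.sum_const, smul_eq_mul]
  -- final arithmetic
  have huniv : S.card + U.card = n := by
    rw [hU, hn']
    exact Finset.card_add_card_compl S
  have hs2 : 2 * (t.card * (U.card + 1)) = S.card * (U.card + 1) := by
    rw [hSt]; ring
  have hle : S.card ≤ S.card * S.card := by nlinarith [S.card.zero_le]
  have hgoal2 : S.card * n = S.card * S.card + S.card * U.card := by
    rw [← huniv]; ring
  have hsu1 : S.card * (U.card + 1) = S.card * U.card + S.card := by ring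
  omega


lemma pair_ncard_eq_filter_card {V : Type*} [Fintype V] (G : SimpleGraph V) (s : Set V) :
    {p : ↥s × ↥s | (G.induce s).Adj p.1 p.2}.ncard =
      {p : V × V | p.1 ∈ s ∧ p.2 ∈ s ∧ G.Adj p.1 p.2}.ncard := by
  classical
  have himg : {p : V × V | p.1 ∈ s ∧ p.2 ∈ s ∧ G.Adj p.1 p.2} =
      (fun q : ↥s × ↥s => ((q.1 : V), (q.2 : V))) '' {q | (G.induce s).Adj q.1 q.2} := by
    ext p
    constructor
    · rintro ⟨h1, h2, h3⟩
      exact ⟨(⟨p.1, h1⟩, ⟨p.2, h2⟩), h3, rfl⟩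
    · rintro ⟨q, hq, rfl⟩
      exact ⟨q.1.2, q.2.2, hq⟩
  have hinj : Injective (fun q : ↥s × ↥s => ((q.1 : V), (q.2 : V))) := by
    rintro ⟨a, b⟩ ⟨c, d⟩ h
    simp only [Prod.mk.injEq] at h
    exact Prod.ext (Subtype.ext h.1) (Subtype.ext h.2)
  have := Set.ncard_image_of_injective {q : ↥s × ↥s | (G.induce s).Adj q.1 q.2} hinj
  rw [← himg] at this
  rw [← this]

lemma two_mul_edge_ncard {W : Type*} [Fintype W] (H : SimpleGraph W) :
    {p : W × W | H.Adj p.1 p.2}.ncard = 2 * H.edgeSet.ncard := by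
  classical
  have e : H.Dart ≃ {p : W × W | H.Adj p.1 p.2} :=
    { toFun := fun d => ⟨d.toProd, d.adj⟩
      invFun := fun p => ⟨p.1, p.2⟩
      left_inv := fun d => rfl
      right_inv := fun p => rfl }
  have h1 : {p : W × W | H.Adj p.1 p.2}.ncard = Fintype.card {p : W × W | H.Adj p.1 p.2} := by
    rw [← Nat.card_coe_set_eq, Nat.card_eq_fintype_card]
  rw [h1, ← Fintype.card_congr e, dart_card_eq_twice_card_edges]
  congr 1
  rw [← Set.ncard_coe_finset H.edgeFinset, coe_edgeFinset]

theorem no_large_nonbipartite_matching_structure {V : Type*} [Fintype V]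
    (G : SimpleGraph V) (α : ℝ) (hα : 0 < α)
    (h : ¬ ∃ (c : G.ConnectedComponent) (M : G.Subgraph),
        ¬ (G.induce c.supp).Colorable 2 ∧ M.IsMatching ∧ M.verts ⊆ c.supp ∧
        α * Fintype.card V ≤ (M.verts.ncard : ℝ)) :
    ∃ V' V'' : Set V,
      Disjoint V' V'' ∧ V' ∪ V'' = Set.univ ∧
      (∀ u ∈ V', ∀ w ∈ V'', ¬ G.Adj u w) ∧
      (G.induce V').Colorable 2 ∧
      (((G.induce V'').edgeSet.ncard : ℝ) ≤ 0.5 * α * Fintype.card V * V''.ncard) := by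
  classical
  push_neg at h
  set bad : G.ConnectedComponent → Prop := fun c => ¬ (G.induce c.supp).Colorable 2 with hbad
  set V'' : Set V := {v | bad (G.connectedComponentMk v)} with hV''
  set V' : Set V := {v | ¬ bad (G.connectedComponentMk v)} with hV'
  have hVdisj : Disjoint V' V'' := by
    rw [Set.disjoint_left]
    intro v hv hv'
    exact hv hv'
  have hVunion : V' ∪ V'' = Set.univ := by
    ext v
    simp only [Set.mem_union, hV', hV'', Set.mem_setOf_eq, Set.mem_univ, iff_true]
    tauto
  refine ⟨V', V'', hVdisj, hVunion, ?_, ?_, ?_⟩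
  · -- no edges between
    intro u hu w hw hadj
    have hcc : G.connectedComponentMk u = G.connectedComponentMk w :=
      ConnectedComponent.sound hadj.reachable
    exact hu (hcc ▸ hw)
  · -- bipartite part
    have hcol : ∀ c : G.ConnectedComponent, ¬ bad c → (G.induce c.supp).Coloring (Fin 2) :=
      fun c hc => (not_not.mp hc).some
    set F' : G.ConnectedComponent → V → Fin 2 := fun c v =>
      if h : (¬ bad c) ∧ v ∈ c.supp then hcol c h.1 ⟨v, h.2⟩ else 0 with hF'
    refine ⟨Coloring.mk (fun v => F' (G.connectedComponentMk v.val) v.val) ?_⟩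
    intro u w huw
    have hG : G.Adj ↑u ↑w := huw
    have hcc : G.connectedComponentMk (w : V) = G.connectedComponentMk (u : V) :=
      (ConnectedComponent.sound hG.reachable).symm
    show F' (G.connectedComponentMk ↑u) ↑u ≠ F' (G.connectedComponentMk ↑w) ↑w
    rw [hcc]
    have hgood : ¬ bad (G.connectedComponentMk (u : V)) := u.2
    have hu' : (u : V) ∈ (G.connectedComponentMk (u : V)).supp :=
      (ConnectedComponent.mem_supp_iff _ _).2 rfl
    have hw' : (w : V) ∈ (G.connectedComponentMk (u : V)).supp :=
      (ConnectedComponent.mem_supp_iff _ _).2 hcc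
    simp only [hF', dif_pos (And.intro hgood hu'), dif_pos (And.intro hgood hw')]
    exact (hcol _ hgood).valid hG
  · -- edge bound
    haveI : Finite G.ConnectedComponent :=
      Finite.of_surjective G.connectedComponentMk (fun c => c.exists_rep)
    haveI : Fintype G.ConnectedComponent := Fintype.ofFinite _
    set N := Fintype.card V with hN
    set FF : Finset G.ConnectedComponent := Finset.univ.filter bad with hFF
    have hcomp : ∀ c : G.ConnectedComponent, bad c →
        ({p : ↥c.supp × ↥c.supp | (G.induce c.supp).Adj p.1 p.2}.ncard : ℝ) ≤
          α * N * Fintype.card ↥c.supp := by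
      intro c hc
      obtain ⟨M, hMm, hMb⟩ := key_matching_bound (G.induce c.supp)
      have hemb : Injective (Embedding.induce c.supp (G := G)).toHom := by
        intro a b hab
        exact Subtype.ext hab
      have hmap := h c (M.map (Embedding.induce c.supp).toHom) hc (hMm.map _ hemb) ?_
      · have hvc : (M.map (Embedding.induce c.supp).toHom).verts.ncard = M.verts.ncard := by
          rw [Subgraph.map_verts]
          exact Set.ncard_image_of_injective _ hemb
        rw [hvc] at hmap
        have hcast : ((M.verts.ncard * Fintype.card ↥c.supp : ℕ) : ℝ) =
            (M.verts.ncard : ℝ) * (Fintype.card ↥c.supp : ℝ) := by push_cast; ring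
        calc ({p : ↥c.supp × ↥c.supp | (G.induce c.supp).Adj p.1 p.2}.ncard : ℝ)
            ≤ ((M.verts.ncard * Fintype.card ↥c.supp : ℕ) : ℝ) := by exact_mod_cast hMb
          _ = (M.verts.ncard : ℝ) * (Fintype.card ↥c.supp : ℝ) := hcast
          _ ≤ α * N * Fintype.card ↥c.supp := by
              apply mul_le_mul_of_nonneg_right (le_of_lt hmap) (by positivity)
      · rw [Subgraph.map_verts]
        rintro x ⟨y, -, rfl⟩
        exact y.2
    set P : Finset (V × V) :=
      Finset.univ.filter (fun p : V × V => p.1 ∈ V'' ∧ p.2 ∈ V'' ∧ G.Adj p.1 p.2) with hP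
    have h2e : 2 * (G.induce V'').edgeSet.ncard = P.card := by
      rw [← two_mul_edge_ncard, pair_ncard_eq_filter_card, Set.ncard_eq_toFinset_card',
        Set.toFinset_setOf]
    have hPsplit : P.card = ∑ c ∈ FF, (P.filter (fun p => G.connectedComponentMk p.1 = c)).card := by
      refine Finset.card_eq_sum_card_fiberwise (fun p hp => ?_)
      simp only [hP, Finset.mem_coe, Finset.mem_filter, Finset.mem_univ, true_and] at hp
      simp only [hFF, Finset.mem_coe, Finset.mem_filter, Finset.mem_univ, true_and]
      exact hp.1
    have hPc : ∀ c ∈ FF, ((P.filter (fun p => G.connectedComponentMk p.1 = c)).card : ℝ) ≤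
        α * N * Fintype.card ↥c.supp := by
      intro c hc
      rw [hFF, Finset.mem_filter] at hc
      have heq : P.filter (fun p => G.connectedComponentMk p.1 = c) =
          Finset.univ.filter (fun p : V × V => p.1 ∈ c.supp ∧ p.2 ∈ c.supp ∧ G.Adj p.1 p.2) := by
        ext p
        simp only [hP, Finset.filter_filter, Finset.mem_filter, Finset.mem_univ, true_and,
          ConnectedComponent.mem_supp_iff]
        constructor
        · rintro ⟨⟨h1, h2, h3⟩, h4⟩
          exact ⟨h4, (ConnectedComponent.sound h3.reachable).symm.trans h4, h3⟩
        · rintro ⟨h1, h2, h3⟩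
          refine ⟨⟨?_, ?_, h3⟩, h1⟩
          · show bad (G.connectedComponentMk p.1); rw [h1]; exact hc.2
          · show bad (G.connectedComponentMk p.2); rw [h2]; exact hc.2
      rw [heq]
      have := hcomp c hc.2
      rw [pair_ncard_eq_filter_card, Set.ncard_eq_toFinset_card', Set.toFinset_setOf] at this
      exact this
    have hVsum : V''.toFinset.card = ∑ c ∈ FF, Fintype.card ↥c.supp := by
      rw [Finset.card_eq_sum_card_fiberwise
        (f := fun v => G.connectedComponentMk v) (t := FF) (fun v hv => by
          simp only [Finset.mem_coe, Set.mem_toFinset, hV'', Set.mem_setOf_eq] at hv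
          simp only [hFF, Finset.mem_coe, Finset.mem_filter, Finset.mem_univ, true_and]
          exact hv)]
      refine Finset.sum_congr rfl (fun c hc => ?_)
      rw [hFF, Finset.mem_filter] at hc
      have heq : V''.toFinset.filter (fun v => G.connectedComponentMk v = c) = c.supp.toFinset := by
        ext v
        simp only [Finset.mem_filter, Set.mem_toFinset, hV'', Set.mem_setOf_eq,
          ConnectedComponent.mem_supp_iff]
        constructor
        · rintro ⟨-, h2⟩; exact h2
        · intro h1
          refine ⟨?_, h1⟩
          show bad (G.connectedComponentMk v); rw [h1]; exact hc.2
      rw [heq, Set.toFinset_card]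
    have hchain : (P.card : ℝ) ≤ α * N * V''.ncard := by
      rw [hPsplit]
      push_cast
      calc ∑ c ∈ FF, ((P.filter (fun p => G.connectedComponentMk p.1 = c)).card : ℝ)
          ≤ ∑ c ∈ FF, α * N * Fintype.card ↥c.supp := Finset.sum_le_sum hPc
        _ = α * N * ∑ c ∈ FF, (Fintype.card ↥c.supp : ℝ) := by rw [Finset.mul_sum]
        _ = α * N * V''.ncard := by
            rw [Set.ncard_eq_toFinset_card', ← Nat.cast_sum, ← hVsum]
    have h2e' : ((G.induce V'').edgeSet.ncard : ℝ) * 2 = (P.card : ℝ) := by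
      rw [← h2e]; push_cast; ring
    nlinarith [hchain, h2e']
end

section
/- Let 0 ≤ ν1 ≤ ν2 ≤ 1, let 0 < ε < 0.01·ν1, and let N ≥ 4/ε be an integer. Let U1, U2 be two (not necessarily disjoint) subsets of {1, 2, …, N} with |U1| = ν1·N and |U2| = ν2·N. Let G be a graph obtained from the complete graph on the vertex set {1, …, N} by removing all edges with both endpoints in U1, all edges with both endpoints in U2, and possibly at most ε³·N(N−1)/2 other edges. Then G contains a connected component with a matching saturating at least: (i) (1 − 5ε)·N vertices, if |U2| ≤ N/2; and (ii) (2 − 7ε)·N − 2|U2| vertices, if |U2| ≥ N/2. -/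
open Finset SimpleGraph

set_option linter.unusedSectionVars false

section Helpers
variable {V : Type*} [DecidableEq V]

private lemma ne_of_mem_mem_disj {s t : Finset V} {x y : V}
    (hx : x ∈ s) (hy : y ∈ t) (h : Disjoint s t) : x ≠ y :=
  fun hxy => Finset.disjoint_left.mp h hx (hxy ▸ hy)

def PDist (P : Finset (V × V)) : Prop :=
  ∀ p ∈ P, ∀ q ∈ P, p ≠ q → p.1 ≠ q.1 ∧ p.1 ≠ q.2 ∧ p.2 ≠ q.1 ∧ p.2 ≠ q.2

def PSep (P Q : Finset (V × V)) : Prop :=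
  ∀ p ∈ P, ∀ q ∈ Q, p.1 ≠ q.1 ∧ p.1 ≠ q.2 ∧ p.2 ≠ q.1 ∧ p.2 ≠ q.2

lemma PSep.disjoint {P Q : Finset (V × V)} (h : PSep P Q) : Disjoint P Q := by
  rw [Finset.disjoint_left]
  intro p hp hq
  exact (h p hp p hq).1 rfl

lemma PDist.union {P Q : Finset (V × V)} (hP : PDist P) (hQ : PDist Q) (h : PSep P Q) :
    PDist (P ∪ Q) := by
  intro p hp q hq hne
  rcases Finset.mem_union.mp hp with hp | hp <;> rcases Finset.mem_union.mp hq with hq | hq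
  · exact hP p hp q hq hne
  · exact h p hp q hq
  · obtain ⟨h1, h2, h3, h4⟩ := h q hq p hp
    exact ⟨h1.symm, h3.symm, h2.symm, h4.symm⟩
  · exact hQ p hp q hq hne

lemma PSep.of_regions {P Q : Finset (V × V)} {a1 a2 b1 b2 : Finset V}
    (hP : ∀ p ∈ P, p.1 ∈ a1 ∧ p.2 ∈ a2) (hQ : ∀ q ∈ Q, q.1 ∈ b1 ∧ q.2 ∈ b2)
    (h11 : Disjoint a1 b1) (h12 : Disjoint a1 b2) (h21 : Disjoint a2 b1)
    (h22 : Disjoint a2 b2) : PSep P Q := by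
  intro p hp q hq
  obtain ⟨hp1, hp2⟩ := hP p hp
  obtain ⟨hq1, hq2⟩ := hQ q hq
  exact ⟨ne_of_mem_mem_disj hp1 hq1 h11, ne_of_mem_mem_disj hp1 hq2 h12,
    ne_of_mem_mem_disj hp2 hq1 h21, ne_of_mem_mem_disj hp2 hq2 h22⟩

lemma pdist_of_bip {P : Finset (V × V)} {X Y : Finset V}
    (hmem : ∀ p ∈ P, p.1 ∈ X ∧ p.2 ∈ Y)
    (hd : Disjoint X Y)
    (hw : ∀ p ∈ P, ∀ q ∈ P, p ≠ q → p.1 ≠ q.1 ∧ p.2 ≠ q.2) : PDist P := by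
  intro p hp q hq hne
  obtain ⟨h1, h2⟩ := hw p hp q hq hne
  obtain ⟨hp1, hp2⟩ := hmem p hp
  obtain ⟨hq1, hq2⟩ := hmem q hq
  exact ⟨h1, ne_of_mem_mem_disj hp1 hq2 hd, (ne_of_mem_mem_disj hq1 hp2 hd).symm, h2⟩

lemma greedyBip (adj : V → V → Prop) [DecidableRel adj] (n : ℕ) :
    ∀ X Y : Finset V, X.card ≤ n → Disjoint X Y →
    ∃ (P : Finset (V × V)) (X' Y' : Finset V),
      (∀ p ∈ P, p.1 ∈ X ∧ p.2 ∈ Y ∧ adj p.1 p.2) ∧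
      (∀ p ∈ P, ∀ q ∈ P, p ≠ q → p.1 ≠ q.1 ∧ p.2 ≠ q.2) ∧
      X' ⊆ X ∧ Y' ⊆ Y ∧
      (∀ p ∈ P, p.1 ∉ X' ∧ p.2 ∉ Y') ∧
      X'.card + P.card = X.card ∧ Y'.card + P.card = Y.card ∧
      (∀ x ∈ X', ∀ y ∈ Y', ¬ adj x y) := by
  induction n with
  | zero =>
    intro X Y hn hd
    have hX : X = ∅ := Finset.card_eq_zero.mp (Nat.le_zero.mp hn)
    subst hX
    exact ⟨∅, ∅, Y, by simp, by simp, by simp, subset_rfl, by simp, by simp, by simp,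
      by simp⟩
  | succ n ih =>
    intro X Y hn hd
    by_cases hex : ∃ x ∈ X, ∃ y ∈ Y, adj x y
    · obtain ⟨x, hx, y, hy, hxy⟩ := hex
      have hXpos : 1 ≤ X.card := Finset.card_pos.mpr ⟨x, hx⟩
      have hYpos : 1 ≤ Y.card := Finset.card_pos.mpr ⟨y, hy⟩
      have hcard : (X.erase x).card ≤ n := by
        rw [Finset.card_erase_of_mem hx]; omega
      obtain ⟨P, X', Y', hmem, hdist, hX', hY', hnot, hcX, hcY, hnoadj⟩ :=
        ih (X.erase x) (Y.erase y) hcard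
          (Finset.disjoint_of_subset_left (Finset.erase_subset _ _)
            (Finset.disjoint_of_subset_right (Finset.erase_subset _ _) hd))
      have hxyP : (x, y) ∉ P := fun h => (Finset.mem_erase.mp (hmem _ h).1).1 rfl
      refine ⟨insert (x, y) P, X', Y', ?_, ?_, hX'.trans (Finset.erase_subset _ _),
        hY'.trans (Finset.erase_subset _ _), ?_, ?_, ?_, hnoadj⟩
      · intro p hp
        rcases Finset.mem_insert.mp hp with rfl | hp
        · exact ⟨hx, hy, hxy⟩
        · obtain ⟨h1, h2, h3⟩ := hmem p hp
          exact ⟨Finset.mem_of_mem_erase h1, Finset.mem_of_mem_erase h2, h3⟩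
      · intro p hp q hq hne
        rcases Finset.mem_insert.mp hp with rfl | hp <;>
          rcases Finset.mem_insert.mp hq with rfl | hq
        · exact absurd rfl hne
        · exact ⟨fun h => (Finset.mem_erase.mp (hmem q hq).1).1 h.symm,
            fun h => (Finset.mem_erase.mp (hmem q hq).2.1).1 h.symm⟩
        · exact ⟨fun h => (Finset.mem_erase.mp (hmem p hp).1).1 h,
            fun h => (Finset.mem_erase.mp (hmem p hp).2.1).1 h⟩
        · exact hdist p hp q hq hne
      · intro p hp
        rcases Finset.mem_insert.mp hp with rfl | hp
        · exact ⟨fun h => (Finset.mem_erase.mp (hX' h)).1 rfl,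
            fun h => (Finset.mem_erase.mp (hY' h)).1 rfl⟩
        · exact hnot p hp
      · rw [Finset.card_insert_of_notMem hxyP]
        rw [Finset.card_erase_of_mem hx] at hcX; omega
      · rw [Finset.card_insert_of_notMem hxyP]
        rw [Finset.card_erase_of_mem hy] at hcY; omega
    · push_neg at hex
      exact ⟨∅, X, Y, by simp, by simp, subset_rfl, subset_rfl, by simp, by simp, by simp,
        fun x hx y hy => hex x hx y hy⟩

lemma greedyInt (adj : V → V → Prop) [DecidableRel adj] (n : ℕ) :
    ∀ X : Finset V, X.card ≤ n →
    ∃ (P : Finset (V × V)) (X' : Finset V),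
      (∀ p ∈ P, p.1 ∈ X ∧ p.2 ∈ X ∧ adj p.1 p.2 ∧ p.1 ≠ p.2) ∧
      PDist P ∧ X' ⊆ X ∧
      (∀ p ∈ P, p.1 ∉ X' ∧ p.2 ∉ X') ∧
      X'.card + 2 * P.card = X.card ∧
      (∀ x ∈ X', ∀ y ∈ X', x ≠ y → ¬ adj x y) := by
  induction n with
  | zero =>
    intro X hn
    have hX : X = ∅ := Finset.card_eq_zero.mp (Nat.le_zero.mp hn)
    subst hX
    exact ⟨∅, ∅, by simp, by intro p hp; simp at hp, subset_rfl, by simp, by simp, by simp⟩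
  | succ n ih =>
    intro X hn
    by_cases hex : ∃ x ∈ X, ∃ y ∈ X, x ≠ y ∧ adj x y
    · obtain ⟨x, hx, y, hy, hne, hxy⟩ := hex
      have hyX : y ∈ (X.erase x) := Finset.mem_erase.mpr ⟨hne.symm, hy⟩
      have hc1 : (X.erase x).card = X.card - 1 := Finset.card_erase_of_mem hx
      have hc2 : ((X.erase x).erase y).card = (X.erase x).card - 1 :=
        Finset.card_erase_of_mem hyX
      have hXpos : 1 ≤ (X.erase x).card := Finset.card_pos.mpr ⟨y, hyX⟩
      have hcard : ((X.erase x).erase y).card ≤ n := by omega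
      obtain ⟨P, X', hmem, hdist, hX', hnot, hcX, hnoadj⟩ := ih ((X.erase x).erase y) hcard
      have hsub : ((X.erase x).erase y) ⊆ X :=
        (Finset.erase_subset _ _).trans (Finset.erase_subset _ _)
      have hxyP : (x, y) ∉ P := fun h =>
        (Finset.mem_erase.mp (Finset.mem_of_mem_erase (hmem _ h).1)).1 rfl
      have hne1 : ∀ p ∈ P, p.1 ≠ x ∧ p.1 ≠ y ∧ p.2 ≠ x ∧ p.2 ≠ y := by
        intro p hp
        obtain ⟨h1, h2, _⟩ := hmem p hp
        exact ⟨(Finset.mem_erase.mp (Finset.mem_of_mem_erase h1)).1,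
          (Finset.mem_erase.mp h1).1,
          (Finset.mem_erase.mp (Finset.mem_of_mem_erase h2)).1,
          (Finset.mem_erase.mp h2).1⟩
      refine ⟨insert (x, y) P, X', ?_, ?_, hX'.trans hsub, ?_, ?_, hnoadj⟩
      · intro p hp
        rcases Finset.mem_insert.mp hp with rfl | hp
        · exact ⟨hx, hy, hxy, hne⟩
        · obtain ⟨h1, h2, h3, h4⟩ := hmem p hp
          exact ⟨hsub h1, hsub h2, h3, h4⟩
      · intro p hp q hq hpq
        rcases Finset.mem_insert.mp hp with rfl | hp <;>
          rcases Finset.mem_insert.mp hq with rfl | hq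
        · exact absurd rfl hpq
        · obtain ⟨h1, h2, h3, h4⟩ := hne1 q hq
          exact ⟨h1.symm, h3.symm, h2.symm, h4.symm⟩
        · obtain ⟨h1, h2, h3, h4⟩ := hne1 p hp
          exact ⟨h1, h2, h3, h4⟩
        · exact hdist p hp q hq hpq
      · intro p hp
        rcases Finset.mem_insert.mp hp with rfl | hp
        · constructor
          · exact fun h => (Finset.mem_erase.mp (Finset.mem_of_mem_erase (hX' h))).1 rfl
          · exact fun h => (Finset.mem_erase.mp (hX' h)).1 rfl
        · exact hnot p hp
      · rw [Finset.card_insert_of_notMem hxyP]; omega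
    · push_neg at hex
      exact ⟨∅, X, by simp, by intro p hp; simp at hp, subset_rfl, by simp, by simp,
        fun x hx y hy h => hex x hx y hy h⟩


lemma PSep.union_left {P Q R : Finset (V × V)} (h1 : PSep P R) (h2 : PSep Q R) :
    PSep (P ∪ Q) R := by
  intro p hp q hq
  rcases Finset.mem_union.mp hp with hp | hp
  · exact h1 p hp q hq
  · exact h2 p hp q hq

end Helpers


lemma exists_matching_of_pairs {V : Type*} [Fintype V] [DecidableEq V]
    (G : SimpleGraph V) (P : Finset (V × V))
    (hadj : ∀ p ∈ P, G.Adj p.1 p.2)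
    (hPD : ∀ p ∈ P, ∀ q ∈ P, p ≠ q → p.1 ≠ q.1 ∧ p.1 ≠ q.2 ∧ p.2 ≠ q.1 ∧ p.2 ≠ q.2) :
    ∃ M : G.Subgraph, M.IsMatching ∧
      (M.verts = ↑(P.image Prod.fst ∪ P.image Prod.snd)) ∧
      (M.verts.ncard = 2 * P.card) := by
  classical
  have hne : ∀ p ∈ P, p.1 ≠ p.2 := fun p hp => (hadj p hp).ne
  refine ⟨{ verts := ↑(P.image Prod.fst ∪ P.image Prod.snd),
            Adj := fun u v => ∃ p ∈ P, (p.1 = u ∧ p.2 = v) ∨ (p.1 = v ∧ p.2 = u),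
            adj_sub := ?_, edge_vert := ?_, symm := ?_ }, ?_, rfl, ?_⟩
  · rintro u v ⟨p, hp, ⟨rfl, rfl⟩ | ⟨rfl, rfl⟩⟩
    · exact hadj p hp
    · exact (hadj p hp).symm
  · rintro u v ⟨p, hp, ⟨rfl, rfl⟩ | ⟨rfl, rfl⟩⟩
    · simp only [Finset.coe_union, Set.mem_union, Finset.mem_coe, Finset.mem_image]
      exact Or.inl ⟨p, hp, rfl⟩
    · simp only [Finset.coe_union, Set.mem_union, Finset.mem_coe, Finset.mem_image]
      exact Or.inr ⟨p, hp, rfl⟩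
  · refine ⟨?_⟩; rintro u v ⟨p, hp, ⟨rfl, rfl⟩ | ⟨rfl, rfl⟩⟩
    · exact ⟨p, hp, Or.inr ⟨rfl, rfl⟩⟩
    · exact ⟨p, hp, Or.inl ⟨rfl, rfl⟩⟩
  · -- IsMatching
    intro v hv
    simp only [Finset.coe_union, Set.mem_union, Finset.mem_coe, Finset.mem_image] at hv
    rcases hv with ⟨p, hp, hv⟩ | ⟨p, hp, hv⟩
    · refine ⟨p.2, ⟨p, hp, Or.inl ⟨hv, rfl⟩⟩, ?_⟩
      rintro w ⟨q, hq, ⟨hq1, rfl⟩ | ⟨hq1, hq2⟩⟩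
      · by_cases hpq : p = q
        · subst hpq; rfl
        · exact absurd (hq1.trans hv.symm) ((hPD q hq p hp (Ne.symm hpq)).1)
      · by_cases hpq : p = q
        · subst hpq; exact absurd (hq2.trans hv.symm) (Ne.symm (hne p hp))
        · exact absurd (hq2.trans hv.symm) ((hPD q hq p hp (Ne.symm hpq)).2.2.1)
    · refine ⟨p.1, ⟨p, hp, Or.inr ⟨rfl, hv⟩⟩, ?_⟩
      rintro w ⟨q, hq, ⟨hq1, hq2⟩ | ⟨hq1, hq2⟩⟩
      · by_cases hpq : p = q
        · subst hpq; exact absurd (hq1.trans hv.symm) (hne p hp)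
        · exact absurd (hq1.trans hv.symm) ((hPD q hq p hp (Ne.symm hpq)).2.1)
      · by_cases hpq : p = q
        · subst hpq; rw [← hq1]
        · exact absurd (hq2.trans hv.symm) ((hPD q hq p hp (Ne.symm hpq)).2.2.2)
  · -- card
    rw [Set.ncard_coe_finset]
    have hdisj : Disjoint (P.image Prod.fst) (P.image Prod.snd) := by
      rw [Finset.disjoint_left]
      rintro v h1 h2
      obtain ⟨p, hp, hv1⟩ := Finset.mem_image.mp h1
      obtain ⟨q, hq, hv2⟩ := Finset.mem_image.mp h2
      by_cases hpq : p = q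
      · subst hpq; exact hne p hp (hv1.trans hv2.symm)
      · exact (hPD p hp q hq hpq).2.1 (hv1.trans hv2.symm)
    rw [Finset.card_union_of_disjoint hdisj]
    have h1 : (P.image Prod.fst).card = P.card := by
      apply Finset.card_image_of_injOn
      intro p hp q hq h
      by_contra hpq
      exact (hPD p hp q hq hpq).1 h
    have h2 : (P.image Prod.snd).card = P.card := by
      apply Finset.card_image_of_injOn
      intro p hp q hq h
      by_contra hpq
      exact (hPD p hp q hq hpq).2.2.2 h
    omega

set_option maxHeartbeats 12000000 in
theorem nearly_complete_two_holes_matching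
    (ν1 ν2 ε : ℝ) (N : ℕ) (h01 : 0 ≤ ν1) (h12 : ν1 ≤ ν2) (h21 : ν2 ≤ 1)
    (hε : 0 < ε) (hε' : ε < 0.01 * ν1) (hN : 4 / ε ≤ (N : ℝ))
    (U1 U2 : Set (Fin N)) (hU1 : (U1.ncard : ℝ) = ν1 * N) (hU2 : (U2.ncard : ℝ) = ν2 * N)
    (G : SimpleGraph (Fin N))
    (hU1e : ∀ u ∈ U1, ∀ v ∈ U1, ¬ G.Adj u v)
    (hU2e : ∀ u ∈ U2, ∀ v ∈ U2, ¬ G.Adj u v)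
    (hrem : ({e ∈ (⊤ : SimpleGraph (Fin N)).edgeSet | e ∉ G.edgeSet ∧
          ¬ (∀ x ∈ e, x ∈ U1) ∧ ¬ (∀ x ∈ e, x ∈ U2)}.ncard : ℝ)
        ≤ ε ^ 3 * ((N : ℝ) * ((N : ℝ) - 1) / 2)) :
    ((U2.ncard : ℝ) ≤ (N : ℝ) / 2 →
      ∃ (c : G.ConnectedComponent) (M : G.Subgraph),
        M.IsMatching ∧ M.verts ⊆ c.supp ∧ (1 - 5 * ε) * N ≤ (M.verts.ncard : ℝ)) ∧
    ((N : ℝ) / 2 ≤ (U2.ncard : ℝ) →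
      ∃ (c : G.ConnectedComponent) (M : G.Subgraph),
        M.IsMatching ∧ M.verts ⊆ c.supp ∧
        (2 - 7 * ε) * N - 2 * U2.ncard ≤ (M.verts.ncard : ℝ)) := by
  classical
  have hNR0 : (0:ℝ) ≤ (N:ℝ) := Nat.cast_nonneg N
  have hεs : ε ≤ 0.01 := by nlinarith
  have hεN : 4 ≤ ε * (N:ℝ) := by
    rw [div_le_iff₀ hε] at hN; linarith
  have hN400 : (400:ℝ) ≤ (N:ℝ) := by nlinarith
  have hNpos : 0 < N := by exact_mod_cast lt_of_lt_of_le (by norm_num : (0:ℝ) < 400) hN400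
  -- finsets
  set U1f : Finset (Fin N) := (Set.toFinite U1).toFinset with hU1fdef
  set U2f : Finset (Fin N) := (Set.toFinite U2).toFinset with hU2fdef
  have hm1 : ∀ x, x ∈ U1f ↔ x ∈ U1 := fun x => Set.Finite.mem_toFinset _
  have hm2 : ∀ x, x ∈ U2f ↔ x ∈ U2 := fun x => Set.Finite.mem_toFinset _
  set Wf : Finset (Fin N) := U1f ∩ U2f with hWfdef
  set Af : Finset (Fin N) := U1f \ U2f with hAfdef
  set Bf : Finset (Fin N) := U2f \ U1f with hBfdef
  set Ff : Finset (Fin N) := Finset.univ \ (U1f ∪ U2f) with hFfdef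
  have hmA : ∀ x, x ∈ Af → x ∈ U1 ∧ x ∉ U2 := by
    intro x hx
    rw [hAfdef, Finset.mem_sdiff, hm1, hm2] at hx; exact hx
  have hmB : ∀ x, x ∈ Bf → x ∈ U2 ∧ x ∉ U1 := by
    intro x hx
    rw [hBfdef, Finset.mem_sdiff, hm1, hm2] at hx; exact hx
  have hmW : ∀ x, x ∈ Wf → x ∈ U1 ∧ x ∈ U2 := by
    intro x hx
    rw [hWfdef, Finset.mem_inter, hm1, hm2] at hx; exact hx
  have hmF : ∀ x, x ∈ Ff → x ∉ U1 ∧ x ∉ U2 := by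
    intro x hx
    rw [hFfdef, Finset.mem_sdiff, Finset.mem_union, hm1, hm2] at hx
    exact ⟨fun h => hx.2 (Or.inl h), fun h => hx.2 (Or.inr h)⟩
  -- cards
  have hcardA : Af.card + Wf.card = U1f.card := Finset.card_sdiff_add_card_inter U1f U2f
  have hcardB : Bf.card + Wf.card = U2f.card := by
    rw [hBfdef, hWfdef, Finset.inter_comm]
    exact Finset.card_sdiff_add_card_inter U2f U1f
  have hcardTot : Af.card + Bf.card + Wf.card + Ff.card = N := by
    have h1 : (U1f ∪ U2f).card + Wf.card = U1f.card + U2f.card := by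
      rw [hWfdef]; exact Finset.card_union_add_card_inter U1f U2f
    have h2 : Ff.card = Fintype.card (Fin N) - (U1f ∪ U2f).card := Finset.card_univ_diff _
    have h3 : (U1f ∪ U2f).card ≤ Fintype.card (Fin N) := Finset.card_le_univ _
    rw [Fintype.card_fin] at h2 h3
    omega
  have hu1R : (U1f.card : ℝ) = ν1 * N := by
    rw [← hU1, Set.ncard_eq_toFinset_card U1 (Set.toFinite U1)]
  have hu2R : (U2f.card : ℝ) = ν2 * N := by
    rw [← hU2, Set.ncard_eq_toFinset_card U2 (Set.toFinite U2)]
  have hu12 : U1f.card ≤ U2f.card := by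
    have : (U1f.card : ℝ) ≤ (U2f.card : ℝ) := by
      rw [hu1R, hu2R]; exact mul_le_mul_of_nonneg_right h12 hNR0
    exact_mod_cast this
  have hu2cast : (U2.ncard : ℝ) = (U2f.card : ℝ) := by
    rw [Set.ncard_eq_toFinset_card U2 (Set.toFinite U2)]
  -- removed edges
  set Rs : Set (Sym2 (Fin N)) := {e ∈ (⊤ : SimpleGraph (Fin N)).edgeSet | e ∉ G.edgeSet ∧
          ¬ (∀ x ∈ e, x ∈ U1) ∧ ¬ (∀ x ∈ e, x ∈ U2)} with hRsdef
  set Rfin : Finset (Sym2 (Fin N)) := (Set.toFinite Rs).toFinset with hRfindef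
  have hrfinR : (Rfin.card : ℝ) ≤ ε^3 * (N:ℝ)^2 / 2 := by
    have h1 : Rs.ncard = Rfin.card := Set.ncard_eq_toFinset_card Rs (Set.toFinite Rs)
    have h2 : (Rs.ncard : ℝ) ≤ ε ^ 3 * ((N : ℝ) * ((N : ℝ) - 1) / 2) := hrem
    rw [h1] at h2
    nlinarith [pow_nonneg (le_of_lt hε) 3]
  have hrm : ∀ x y : Fin N, x ≠ y → ¬(x ∈ U1 ∧ y ∈ U1) → ¬(x ∈ U2 ∧ y ∈ U2) →
      ¬ G.Adj x y → s(x,y) ∈ Rfin := by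
    intro x y hxy h1 h2 hadj
    rw [hRfindef, Set.Finite.mem_toFinset, hRsdef]
    refine ⟨?_, ?_, ?_, ?_⟩
    · exact ((⊤ : SimpleGraph (Fin N)).mem_edgeSet).mpr (by simpa using hxy)
    · exact fun h => hadj (G.mem_edgeSet.mp h)
    · intro hall
      exact h1 ⟨hall x (Sym2.mem_mk_left x y), hall y (Sym2.mem_mk_right x y)⟩
    · intro hall
      exact h2 ⟨hall x (Sym2.mem_mk_left x y), hall y (Sym2.mem_mk_right x y)⟩
  -- cross counting
  have hcross : ∀ X Y : Finset (Fin N), Disjoint X Y →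
      (∀ x ∈ X, ∀ y ∈ Y, s(x,y) ∈ Rfin) → X.card * Y.card ≤ Rfin.card := by
    intro X Y hd hmem
    rw [← Finset.card_product]
    apply Finset.card_le_card_of_injOn (fun p => s(p.1, p.2))
    · intro p hp
      obtain ⟨h1, h2⟩ := Finset.mem_product.mp hp
      exact hmem _ h1 _ h2
    · intro p hp q hq h
      obtain ⟨hp1, hp2⟩ := Finset.mem_product.mp hp
      obtain ⟨hq1, hq2⟩ := Finset.mem_product.mp hq
      rcases Sym2.eq_iff.mp h with ⟨h1, h2⟩ | ⟨h1, h2⟩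
      · exact Prod.ext h1 h2
      · exact absurd h1 (ne_of_mem_mem_disj hp1 hq2 hd)
  have hint : ∀ Z : Finset (Fin N), (∀ x ∈ Z, ∀ y ∈ Z, x ≠ y → s(x,y) ∈ Rfin) →
      Z.card * Z.card ≤ 2 * Rfin.card + Z.card := by
    intro Z hmem
    have hOD : Z.offDiag.card = Z.card * Z.card - Z.card := Finset.offDiag_card Z
    have himg : Z.offDiag.image (fun p => s(p.1, p.2)) ⊆ Rfin := by
      intro e he
      obtain ⟨p, hp, rfl⟩ := Finset.mem_image.mp he
      obtain ⟨h1, h2, h3⟩ := Finset.mem_offDiag.mp hp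
      exact hmem _ h1 _ h2 h3
    have hfib : Z.offDiag.card ≤ 2 * (Z.offDiag.image (fun p => s(p.1, p.2))).card := by
      rw [Finset.card_eq_sum_card_image (fun p => s(p.1, p.2)) Z.offDiag]
      have hb : ∀ e ∈ Z.offDiag.image (fun p => s(p.1, p.2)),
          (Z.offDiag.filter (fun q => s(q.1, q.2) = e)).card ≤ 2 := by
        intro e he
        obtain ⟨p, _, rfl⟩ := Finset.mem_image.mp he
        have hsub : Z.offDiag.filter (fun q => s(q.1, q.2) = s(p.1, p.2)) ⊆ {p, p.swap} := by
          intro q hq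
          obtain ⟨hq1, hq2⟩ := Finset.mem_filter.mp hq
          rcases Sym2.eq_iff.mp hq2 with ⟨h1, h2⟩ | ⟨h1, h2⟩
          · exact Finset.mem_insert.mpr (Or.inl (Prod.ext h1 h2))
          · refine Finset.mem_insert.mpr (Or.inr (Finset.mem_singleton.mpr ?_))
            exact Prod.ext h1 h2
        calc (Z.offDiag.filter (fun q => s(q.1, q.2) = s(p.1, p.2))).card
            ≤ ({p, p.swap} : Finset _).card := Finset.card_le_card hsub
          _ ≤ 2 := (Finset.card_insert_le _ _).trans (by simp)
      calc ∑ e ∈ Z.offDiag.image (fun p => s(p.1, p.2)),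
            (Z.offDiag.filter (fun q => s(q.1, q.2) = e)).card
          ≤ ∑ _e ∈ Z.offDiag.image (fun p => s(p.1, p.2)), 2 := Finset.sum_le_sum hb
        _ = 2 * (Z.offDiag.image (fun p => s(p.1, p.2))).card := by
            rw [Finset.sum_const, smul_eq_mul, mul_comm]
    have himgc := Finset.card_le_card himg
    omega
  -- degrees and bad vertices
  set degR : Fin N → ℕ := fun v => (Rfin.filter (fun e => v ∈ e)).card with hdegRdef
  have hdegsum : ∑ v : Fin N, degR v = 2 * Rfin.card := by
    rw [hdegRdef]
    have h1 : ∀ v : Fin N, (Rfin.filter (fun e => v ∈ e)).card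
        = ∑ e ∈ Rfin, if v ∈ e then 1 else 0 := fun v => Finset.card_filter _ _
    simp only [h1]
    rw [Finset.sum_comm]
    have h2 : ∀ e ∈ Rfin, (∑ v : Fin N, if v ∈ e then 1 else 0) = 2 := by
      intro e he
      rw [hRfindef, Set.Finite.mem_toFinset, hRsdef] at he
      obtain ⟨hetop, _⟩ := he
      induction e with
      | _ x y =>
        have hxy : x ≠ y := by simpa using ((⊤ : SimpleGraph (Fin N)).mem_edgeSet).mp hetop
        rw [← Finset.card_filter]
        have : Finset.univ.filter (fun v => v ∈ s(x,y)) = {x, y} := by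
          ext v
          simp [Sym2.mem_iff]
        rw [this]
        exact Finset.card_pair hxy
    rw [Finset.sum_congr rfl h2, Finset.sum_const, smul_eq_mul, mul_comm]
  set Bad : Finset (Fin N) := Finset.univ.filter (fun v => (ε * N / 4 : ℝ) ≤ degR v)
    with hBaddef
  have hBadR : (Bad.card : ℝ) ≤ 4 * ε^2 * N := by
    have h1 : (Bad.card : ℝ) * (ε * N / 4) ≤ ∑ v ∈ Bad, (degR v : ℝ) := by
      have := Finset.card_nsmul_le_sum Bad (fun v => (degR v : ℝ)) (ε * N / 4)
        (fun v hv => (Finset.mem_filter.mp hv).2)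
      simpa [nsmul_eq_mul] using this
    have h2 : ∑ v ∈ Bad, (degR v : ℝ) ≤ ∑ v : Fin N, (degR v : ℝ) := by
      apply Finset.sum_le_sum_of_subset_of_nonneg (Finset.subset_univ Bad)
      intro v _ _; positivity
    have h3 : ∑ v : Fin N, (degR v : ℝ) = 2 * Rfin.card := by
      rw [← Nat.cast_sum Finset.univ degR, hdegsum]; push_cast; ring
    have h4 : (Bad.card : ℝ) * (ε * N / 4) ≤ ε^3 * N^2 := by
      rw [h3] at h2; linarith [hrfinR]
    have h5 : (0:ℝ) < ε * N / 4 := by linarith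
    have h6 : (Bad.card : ℝ) ≤ ε^3 * N^2 / (ε * N / 4) := (le_div_iff₀ h5).mpr h4
    have hε0 : ε ≠ 0 := ne_of_gt hε
    have hN0 : (N:ℝ) ≠ 0 := by positivity
    have h7 : ε^3 * N^2 / (ε * N / 4) = 4 * ε^2 * N := by
      field_simp
    rw [h7] at h6
    exact h6
  have hgooddeg : ∀ v : Fin N, v ∉ Bad → (degR v : ℝ) < ε * N / 4 := by
    intro v hv
    rw [hBaddef, Finset.mem_filter] at hv
    push_neg at hv
    exact hv (Finset.mem_univ v)
  -- non-adjacency counting for a vertex against a hub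
  have hnonadj : ∀ v : Fin N, ∀ H : Finset (Fin N),
      (∀ h ∈ H, h ≠ v → ¬ G.Adj v h → s(v,h) ∈ Rfin) →
      ((H.filter (fun h => ¬ G.Adj v h)).card : ℝ) ≤ (degR v : ℝ) + 1 := by
    intro v H hallow
    set T := H.filter (fun h => ¬ G.Adj v h) with hTdef
    have hTH : ∀ h ∈ T, h ∈ H ∧ ¬ G.Adj v h := fun h hh => Finset.mem_filter.mp hh
    have h1 : (T.erase v).card ≤ degR v := by
      apply Finset.card_le_card_of_injOn (fun h => s(v, h))
      · intro h hh
        obtain ⟨hne, hhT⟩ := Finset.mem_erase.mp hh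
        obtain ⟨hH, hnadj⟩ := hTH h hhT
        exact Finset.mem_filter.mpr ⟨hallow h hH hne hnadj, Sym2.mem_mk_left v h⟩
      · intro a ha b hb h
        rcases Sym2.eq_iff.mp h with ⟨_, h2⟩ | ⟨h1, h2⟩
        · exact h2
        · exact absurd h2 (Finset.mem_erase.mp ha).1
    have h2 : T.card ≤ (T.erase v).card + 1 := by
      by_cases hvT : v ∈ T
      · rw [Finset.card_erase_of_mem hvT]; omega
      · rw [Finset.erase_eq_of_notMem hvT]; omega
    have : T.card ≤ degR v + 1 := by omega
    exact_mod_cast this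
  -- find common neighbours
  have hcommon : ∀ x y : Fin N, ∀ H : Finset (Fin N),
      ((H.filter (fun h => ¬ G.Adj x h)).card : ℝ)
        + ((H.filter (fun h => ¬ G.Adj y h)).card : ℝ) < (H.card : ℝ) →
      ∃ h ∈ H, G.Adj x h ∧ G.Adj y h := by
    intro x y H hcard
    by_contra hcon
    push_neg at hcon
    have hsub : H ⊆ (H.filter (fun h => ¬ G.Adj x h)) ∪ (H.filter (fun h => ¬ G.Adj y h)) := by
      intro h hh
      by_cases hx : G.Adj x h
      · exact Finset.mem_union_right _ (Finset.mem_filter.mpr ⟨hh, hcon h hh hx⟩)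
      · exact Finset.mem_union_left _ (Finset.mem_filter.mpr ⟨hh, hx⟩)
    have := (Finset.card_le_card hsub).trans (Finset.card_union_le _ _)
    have : (H.card : ℝ) ≤ ((H.filter (fun h => ¬ G.Adj x h)).card : ℝ)
        + ((H.filter (fun h => ¬ G.Adj y h)).card : ℝ) := by exact_mod_cast this
    linarith
  have hfind2 : ∀ x y : Fin N, x ∉ Bad → y ∉ Bad → ∀ H : Finset (Fin N),
      (∀ h ∈ H, h ≠ x → ¬ G.Adj x h → s(x,h) ∈ Rfin) →
      (∀ h ∈ H, h ≠ y → ¬ G.Adj y h → s(y,h) ∈ Rfin) →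
      (ε * N / 2 + 2 < (H.card : ℝ)) →
      ∃ h ∈ H, G.Adj x h ∧ G.Adj y h := by
    intro x y hx hy H hax hay hH
    apply hcommon
    have h1 := hnonadj x H hax
    have h2 := hnonadj y H hay
    have h3 := hgooddeg x hx
    have h4 := hgooddeg y hy
    linarith
  have hfind1 : ∀ x : Fin N, x ∉ Bad → ∀ H : Finset (Fin N),
      (∀ h ∈ H, h ≠ x → ¬ G.Adj x h → s(x,h) ∈ Rfin) →
      (ε * N / 4 + 1 + (Bad.card : ℝ) < (H.card : ℝ)) →
      ∃ h ∈ H, G.Adj x h ∧ h ∉ Bad := by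
    intro x hx H hax hH
    by_contra hcon
    push_neg at hcon
    have hsub : H ⊆ (H.filter (fun h => ¬ G.Adj x h)) ∪ Bad := by
      intro h hh
      by_cases hxh : G.Adj x h
      · exact Finset.mem_union_right _ (hcon h hh hxh)
      · exact Finset.mem_union_left _ (Finset.mem_filter.mpr ⟨hh, hxh⟩)
    have h0 := (Finset.card_le_card hsub).trans (Finset.card_union_le _ _)
    have h1 : (H.card : ℝ) ≤ ((H.filter (fun h => ¬ G.Adj x h)).card : ℝ) + (Bad.card : ℝ) := by
      exact_mod_cast h0
    have h2 := hnonadj x H hax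
    have h3 := hgooddeg x hx
    linarith
  -- allowed-pair lemmas
  have hallowF : ∀ v : Fin N, ∀ h ∈ Ff, h ≠ v → ¬ G.Adj v h → s(v,h) ∈ Rfin := by
    intro v h hh hne hnadj
    obtain ⟨h1, h2⟩ := hmF h hh
    exact hrm v h (Ne.symm hne) (fun hc => h1 hc.2) (fun hc => h2 hc.2) hnadj
  have hallowA : ∀ v : Fin N, v ∉ U1 → ∀ h ∈ Af, h ≠ v → ¬ G.Adj v h → s(v,h) ∈ Rfin := by
    intro v hv h hh hne hnadj
    exact hrm v h (Ne.symm hne) (fun hc => hv hc.1) (fun hc => (hmA h hh).2 hc.2) hnadj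
  have hallowB : ∀ v : Fin N, v ∉ U2 → ∀ h ∈ Bf, h ≠ v → ¬ G.Adj v h → s(v,h) ∈ Rfin := by
    intro v hv h hh hne hnadj
    exact hrm v h (Ne.symm hne) (fun hc => (hmB h hh).2 hc.2) (fun hc => hv hc.1) hnadj
  have hallowAF : ∀ v : Fin N, v ∉ U1 → ∀ h ∈ Af ∪ Ff, h ≠ v → ¬ G.Adj v h → s(v,h) ∈ Rfin := by
    intro v hv h hh hne hnadj
    rcases Finset.mem_union.mp hh with hh | hh
    · exact hallowA v hv h hh hne hnadj
    · exact hallowF v h hh hne hnadj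
  -- square-root style bound
  have hsqb : ∀ m : ℕ, ((m : ℝ)) * m ≤ ε^3 * (N:ℝ)^2 / 2 → (m:ℝ) ≤ 0.08 * (ε*N) := by
    intro m hm
    by_contra hcon
    push_neg at hcon
    have h0 : (0:ℝ) ≤ 0.08 * (ε*N) := by positivity
    nlinarith [hm, mul_le_mul hcon.le hcon.le h0 (h0.trans hcon.le), hεs,
      sq_nonneg (ε * (N:ℝ)), hεN]
  -- basic disjointness
  have hdAU2 : Disjoint Af U2f := Finset.sdiff_disjoint
  have hdBU1 : Disjoint Bf U1f := Finset.sdiff_disjoint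
  have hdFU : Disjoint Ff (U1f ∪ U2f) := Finset.sdiff_disjoint
  have hsWU : Wf ⊆ U1f ∪ U2f := Finset.inter_subset_left.trans Finset.subset_union_left
  have hsAU : Af ⊆ U1f ∪ U2f := Finset.sdiff_subset.trans Finset.subset_union_left
  have hsBU : Bf ⊆ U1f ∪ U2f := Finset.sdiff_subset.trans Finset.subset_union_right
  have hdWF : Disjoint Wf Ff := (hdFU.mono_right hsWU).symm
  have hdAF : Disjoint Af Ff := (hdFU.mono_right hsAU).symm
  have hdBF : Disjoint Bf Ff := (hdFU.mono_right hsBU).symm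
  have hdAB : Disjoint Af Bf := (hdBU1.mono_right Finset.sdiff_subset).symm
  have hdWA : Disjoint Wf Af := (hdAU2.mono_right Finset.inter_subset_right).symm
  have hdWB : Disjoint Wf Bf := (hdBU1.mono_right Finset.inter_subset_left).symm
  constructor
  · -- Case (i) : |U2| ≤ N/2
    intro hc1
    have hu2half : (U2f.card : ℝ) ≤ (N:ℝ)/2 := by rw [← hu2cast]; exact hc1
    have hu2N : 2 * U2f.card ≤ N := by
      have h : ((2 * U2f.card : ℕ) : ℝ) ≤ (N:ℝ) := by push_cast; linarith
      exact_mod_cast h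
    have hsum12 : U1f.card + U2f.card ≤ N := by omega
    have hεN001 : ε*(N:ℝ) ≤ 0.01*N := by nlinarith [hεs, hNR0]
    have hone : (1:ℝ) ≤ 0.25*(ε*N) := by linarith
    have hBadεN : (Bad.card:ℝ) ≤ 0.04*(ε*N) := by nlinarith [hBadR, hεs, mul_nonneg hε.le hNR0]
    -- greedy steps
    obtain ⟨P1, W1, F1, h1mem, h1w, h1sX, h1sY, h1not, h1cX, h1cY, h1na⟩ :=
      greedyBip G.Adj Wf.card Wf Ff le_rfl hdWF
    obtain ⟨P2, A2, B2, h2mem, h2w, h2sX, h2sY, h2not, h2cX, h2cY, h2na⟩ :=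
      greedyBip G.Adj Af.card Af Bf le_rfl hdAB
    have hdB2F1 : Disjoint B2 F1 := (hdBF.mono_left h2sY).mono_right h1sY
    obtain ⟨P3, B3, F3, h3mem, h3w, h3sX, h3sY, h3not, h3cX, h3cY, h3na⟩ :=
      greedyBip G.Adj B2.card B2 F1 le_rfl hdB2F1
    obtain ⟨P4, Z4, h4mem, h4pd, h4sX, h4not, h4c, h4na⟩ :=
      greedyInt G.Adj F3.card F3 le_rfl
    have hWleF : Wf.card ≤ Ff.card := by omega
    have hAleB : Af.card ≤ Bf.card := by omega
    -- leftover bounds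
    have hW1R : (W1.card : ℝ) ≤ 0.08 * (ε*N) := by
      apply hsqb
      have hcle : W1.card * W1.card ≤ Rfin.card := by
        refine le_trans (Nat.mul_le_mul_left _ (by omega)) (hcross W1 F1
          ((hdWF.mono_left h1sX).mono_right h1sY) ?_)
        intro x hx y hy
        exact hrm x y (ne_of_mem_mem_disj (h1sX hx) (h1sY hy) hdWF)
          (fun hc => (hmF y (h1sY hy)).1 hc.2) (fun hc => (hmF y (h1sY hy)).2 hc.2)
          (h1na x hx y hy)
      calc ((W1.card:ℝ)) * W1.card = ((W1.card * W1.card : ℕ) : ℝ) := by push_cast; ring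
        _ ≤ (Rfin.card : ℝ) := Nat.cast_le.mpr hcle
        _ ≤ _ := hrfinR
    have hA2R : (A2.card : ℝ) ≤ 0.08 * (ε*N) := by
      apply hsqb
      have hcle : A2.card * A2.card ≤ Rfin.card := by
        refine le_trans (Nat.mul_le_mul_left _ (by omega)) (hcross A2 B2
          ((hdAB.mono_left h2sX).mono_right h2sY) ?_)
        intro x hx y hy
        exact hrm x y (ne_of_mem_mem_disj (h2sX hx) (h2sY hy) hdAB)
          (fun hc => (hmB y (h2sY hy)).2 hc.2) (fun hc => (hmA x (h2sX hx)).2 hc.1)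
          (h2na x hx y hy)
      calc ((A2.card:ℝ)) * A2.card = ((A2.card * A2.card : ℕ) : ℝ) := by push_cast; ring
        _ ≤ (Rfin.card : ℝ) := Nat.cast_le.mpr hcle
        _ ≤ _ := hrfinR
    have hB3F3cnt : B3.card * F3.card ≤ Rfin.card := by
      refine hcross B3 F3 ((hdB2F1.mono_left h3sX).mono_right h3sY) ?_
      intro x hx y hy
      have hyF : y ∈ Ff := h1sY (h3sY hy)
      exact hrm x y (ne_of_mem_mem_disj (h2sY (h3sX hx)) hyF hdBF)
        (fun hc => (hmF y hyF).1 hc.2) (fun hc => (hmF y hyF).2 hc.2)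
        (h3na x hx y hy)
    have hkey3 : F3.card + Wf.card + Bf.card + A2.card
        = B3.card + Ff.card + W1.card + Af.card := by omega
    have hB3R : (B3.card : ℝ) ≤ 0.25 * (ε*N) := by
      by_contra hcon
      push_neg at hcon
      have hkey3R : (F3.card:ℝ) + Wf.card + Bf.card + A2.card
          = B3.card + Ff.card + W1.card + Af.card := by exact_mod_cast hkey3
      have hBWu2 : (Bf.card:ℝ) + Wf.card = U2f.card := by exact_mod_cast hcardB
      have hTotR : (Af.card:ℝ) + Bf.card + Wf.card + Ff.card = N := by exact_mod_cast hcardTot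
      have hF3ge : (B3.card : ℝ) - A2.card ≤ F3.card := by
        have hW1n : (0:ℝ) ≤ W1.card := Nat.cast_nonneg _
        linarith
      have hcntR : (B3.card:ℝ) * F3.card ≤ ε^3 * N^2 / 2 := by
        calc ((B3.card:ℝ)) * F3.card = ((B3.card * F3.card : ℕ) : ℝ) := by push_cast; ring
          _ ≤ (Rfin.card : ℝ) := Nat.cast_le.mpr hB3F3cnt
          _ ≤ _ := hrfinR
      have h1 : (0.17:ℝ)*(ε*N) ≤ (B3.card:ℝ) - A2.card := by linarith
      have h2 : ((0.25:ℝ)*(ε*N)) * (0.17*(ε*N)) ≤ (B3.card:ℝ) * F3.card := by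
        have := mul_le_mul hcon.le (h1.trans hF3ge) (by nlinarith [hεN]) (Nat.cast_nonneg B3.card)
        linarith
      nlinarith [hεN, hεs, sq_nonneg (ε*(N:ℝ))]
    have hZF : Z4 ⊆ Ff := h4sX.trans (h3sY.trans h1sY)
    have hZint : Z4.card * Z4.card ≤ 2 * Rfin.card + Z4.card := by
      refine hint Z4 ?_
      intro x hx y hy hne
      exact hrm x y hne (fun hc => (hmF x (hZF hx)).1 hc.1) (fun hc => (hmF x (hZF hx)).2 hc.1)
        (h4na x hx y hy hne)
    have hZ4R : (Z4.card:ℝ) ≤ 0.11*(ε*N) + 1 := by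
      by_contra hcon
      push_neg at hcon
      have hcast : (Z4.card:ℝ)*Z4.card ≤ 2*(Rfin.card:ℝ) + Z4.card := by exact_mod_cast hZint
      have h1 : (0.11:ℝ)*(ε*N) < (Z4.card:ℝ) - 1 := by linarith
      have h2 : ((0.11:ℝ)*(ε*N) + 1) * (0.11*(ε*N)) ≤ (Z4.card:ℝ) * ((Z4.card:ℝ) - 1) := by
        apply mul_le_mul hcon.le h1.le (by nlinarith [hεN]) (Nat.cast_nonneg Z4.card)
      nlinarith [hεN, hεs, sq_nonneg (ε*(N:ℝ)), hrfinR]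
    -- pair distinctness and separation
    have hPD1 : PDist P1 := pdist_of_bip (fun p hp => ⟨(h1mem p hp).1, (h1mem p hp).2.1⟩) hdWF h1w
    have hPD2 : PDist P2 := pdist_of_bip (fun p hp => ⟨(h2mem p hp).1, (h2mem p hp).2.1⟩) hdAB h2w
    have hPD3 : PDist P3 := pdist_of_bip (fun p hp => ⟨(h3mem p hp).1, (h3mem p hp).2.1⟩) hdB2F1 h3w
    have hreg1 : ∀ p ∈ P1, p.1 ∈ Wf ∧ p.2 ∈ Ff \ F1 := fun p hp =>
      ⟨(h1mem p hp).1, Finset.mem_sdiff.mpr ⟨(h1mem p hp).2.1, (h1not p hp).2⟩⟩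
    have hreg2 : ∀ p ∈ P2, p.1 ∈ Af ∧ p.2 ∈ Bf \ B2 := fun p hp =>
      ⟨(h2mem p hp).1, Finset.mem_sdiff.mpr ⟨(h2mem p hp).2.1, (h2not p hp).2⟩⟩
    have hreg3 : ∀ p ∈ P3, p.1 ∈ B2 ∧ p.2 ∈ F1 \ F3 := fun p hp =>
      ⟨(h3mem p hp).1, Finset.mem_sdiff.mpr ⟨(h3mem p hp).2.1, (h3not p hp).2⟩⟩
    have hreg4 : ∀ p ∈ P4, p.1 ∈ F3 ∧ p.2 ∈ F3 := fun p hp =>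
      ⟨(h4mem p hp).1, (h4mem p hp).2.1⟩
    have sep12 : PSep P1 P2 := PSep.of_regions hreg1 hreg2 hdWA
      (hdWB.mono_right Finset.sdiff_subset)
      ((hdAF.symm).mono_left Finset.sdiff_subset)
      (((hdBF.symm).mono_left Finset.sdiff_subset).mono_right Finset.sdiff_subset)
    have sep13 : PSep P1 P3 := PSep.of_regions hreg1 hreg3
      (hdWB.mono_right h2sY)
      (hdWF.mono_right ((Finset.sdiff_subset).trans h1sY))
      (((hdBF.symm).mono_left Finset.sdiff_subset).mono_right h2sY)
      (Finset.sdiff_disjoint.mono_right Finset.sdiff_subset)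
    have sep14 : PSep P1 P4 := PSep.of_regions hreg1 hreg4
      (hdWF.mono_right (h3sY.trans h1sY))
      (hdWF.mono_right (h3sY.trans h1sY))
      (Finset.sdiff_disjoint.mono_right h3sY)
      (Finset.sdiff_disjoint.mono_right h3sY)
    have sep23 : PSep P2 P3 := PSep.of_regions hreg2 hreg3
      (hdAB.mono_right h2sY)
      (hdAF.mono_right ((Finset.sdiff_subset).trans h1sY))
      Finset.sdiff_disjoint
      (((hdBF.mono_left Finset.sdiff_subset)).mono_right ((Finset.sdiff_subset).trans h1sY))
    have sep24 : PSep P2 P4 := PSep.of_regions hreg2 hreg4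
      (hdAF.mono_right (h3sY.trans h1sY))
      (hdAF.mono_right (h3sY.trans h1sY))
      ((hdBF.mono_left Finset.sdiff_subset).mono_right (h3sY.trans h1sY))
      ((hdBF.mono_left Finset.sdiff_subset).mono_right (h3sY.trans h1sY))
    have sep34 : PSep P3 P4 := PSep.of_regions hreg3 hreg4
      (hdB2F1.mono_right h3sY)
      (hdB2F1.mono_right h3sY)
      Finset.sdiff_disjoint
      Finset.sdiff_disjoint
    have hPDall : PDist (P1 ∪ P2 ∪ P3 ∪ P4) :=
      ((hPD1.union hPD2 sep12).union hPD3 (sep13.union_left sep23)).union h4pd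
        ((sep14.union_left sep24).union_left sep34)
    have hPcard : (P1 ∪ P2 ∪ P3 ∪ P4).card = P1.card + P2.card + P3.card + P4.card := by
      rw [Finset.card_union_of_disjoint ((sep14.union_left sep24).union_left sep34).disjoint,
          Finset.card_union_of_disjoint (sep13.union_left sep23).disjoint,
          Finset.card_union_of_disjoint sep12.disjoint]
    have htot : 2 * (P1 ∪ P2 ∪ P3 ∪ P4).card + (W1.card + A2.card + B3.card + Z4.card) = N := by
      rw [hPcard]; omega
    have hadjall : ∀ p ∈ P1 ∪ P2 ∪ P3 ∪ P4, G.Adj p.1 p.2 := by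
      intro p hp
      rcases Finset.mem_union.mp hp with hp | hp4
      · rcases Finset.mem_union.mp hp with hp | hp3
        · rcases Finset.mem_union.mp hp with hp1 | hp2
          · exact (h1mem p hp1).2.2
          · exact (h2mem p hp2).2.2
        · exact (h3mem p hp3).2.2
      · exact (h4mem p hp4).2.2.1
    -- filter out bad endpoints
    set Pg := (P1 ∪ P2 ∪ P3 ∪ P4).filter (fun p => p.1 ∉ Bad ∧ p.2 ∉ Bad) with hPgdef
    have hPgsub : Pg ⊆ P1 ∪ P2 ∪ P3 ∪ P4 := Finset.filter_subset _ _
    have hPgcard : (P1 ∪ P2 ∪ P3 ∪ P4).card ≤ Pg.card + Bad.card := by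
      have hmap : ((P1 ∪ P2 ∪ P3 ∪ P4) \ Pg).card ≤ Bad.card := by
        apply Finset.card_le_card_of_injOn (fun p => if p.1 ∈ Bad then p.1 else p.2)
        · intro p hp
          obtain ⟨hpP, hpn⟩ := Finset.mem_sdiff.mp hp
          have hpred : p.1 ∈ Bad ∨ p.2 ∈ Bad := by
            by_contra hcon
            push_neg at hcon
            exact hpn (Finset.mem_filter.mpr ⟨hpP, hcon.1, hcon.2⟩)
          by_cases hb : p.1 ∈ Bad
          · dsimp only; rw [if_pos hb]; exact hb
          · dsimp only; rw [if_neg hb]; exact hpred.resolve_left hb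
        · intro p hp q hq hfq
          dsimp only at hfq
          by_contra hne
          obtain ⟨d1, d2, d3, d4⟩ := hPDall p (Finset.mem_sdiff.mp hp).1 q
            (Finset.mem_sdiff.mp hq).1 hne
          by_cases hb1 : p.1 ∈ Bad <;> by_cases hb2 : q.1 ∈ Bad
          · rw [if_pos hb1, if_pos hb2] at hfq; exact d1 hfq
          · rw [if_pos hb1, if_neg hb2] at hfq; exact d2 hfq
          · rw [if_neg hb1, if_pos hb2] at hfq; exact d3 hfq
          · rw [if_neg hb1, if_neg hb2] at hfq; exact d4 hfq
      have hsplit : ((P1 ∪ P2 ∪ P3 ∪ P4) \ Pg).card + Pg.card = (P1 ∪ P2 ∪ P3 ∪ P4).card :=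
        Finset.card_sdiff_add_card_eq_card hPgsub
      omega
    obtain ⟨M, hMmatch, hMverts, hMcard⟩ := exists_matching_of_pairs G Pg
      (fun p hp => hadjall p (hPgsub hp))
      (fun p hp q hq hne => hPDall p (hPgsub hp) q (hPgsub hq) hne)
    have hfinal : (N:ℝ) - 5*(ε*N) ≤ 2 * (Pg.card : ℝ) := by
      have hc1' : ((P1∪P2∪P3∪P4).card : ℝ) ≤ (Pg.card : ℝ) + Bad.card := by exact_mod_cast hPgcard
      have htotR : 2 * ((P1∪P2∪P3∪P4).card:ℝ)
          + ((W1.card:ℝ) + A2.card + B3.card + Z4.card) = N := by exact_mod_cast htot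
      linarith [hW1R, hA2R, hB3R, hZ4R, hBadεN, hone]
    -- connectivity
    have hQnotU1 : ∀ v, v ∈ Bf ∪ Ff → v ∉ U1 := by
      intro v hv
      rcases Finset.mem_union.mp hv with hv | hv
      · exact (hmB v hv).2
      · exact (hmF v hv).1
    have hreachQ : ∀ x y, x ∈ Af ∪ (Bf ∪ Ff) → y ∈ Af ∪ (Bf ∪ Ff) → x ∉ Bad → y ∉ Bad →
        G.Reachable x y := by
      intro x y hx hy hbx hby
      by_cases hFbig : (N:ℝ)/8 ≤ (Ff.card:ℝ)
      · obtain ⟨h, hh, hxh, hyh⟩ := hfind2 x y hbx hby Ff (fun h hh => hallowF x h hh)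
          (fun h hh => hallowF y h hh) (by linarith [hεN001, hεN, hFbig, hN400])
        exact hxh.reachable.trans hyh.symm.reachable
      · push_neg at hFbig
        have hBWu2 : (Bf.card:ℝ) + Wf.card = U2f.card := by exact_mod_cast hcardB
        have hAWu1 : (Af.card:ℝ) + Wf.card = U1f.card := by exact_mod_cast hcardA
        have hTotR : (Af.card:ℝ) + Bf.card + Wf.card + Ff.card = N := by exact_mod_cast hcardTot
        have hu12R : (U1f.card:ℝ) ≤ U2f.card := by exact_mod_cast hu12
        have hAbig : 3*(N:ℝ)/8 ≤ (Af.card:ℝ) := by linarith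
        have hBbig : 3*(N:ℝ)/8 ≤ (Bf.card:ℝ) := by linarith
        have hcaseAB : ∀ a b, a ∈ Af → b ∈ Bf ∪ Ff → a ∉ Bad → b ∉ Bad → G.Reachable a b := by
          intro a b ha hb hba hbb
          obtain ⟨v, hvB, havd, hvbad⟩ := hfind1 a hba Bf
            (fun h hh => hallowB a (hmA a ha).2 h hh)
            (by linarith [hεN001, hεN, hBadεN, hBbig, hN400])
          obtain ⟨w, hwA, hvw, hbw⟩ := hfind2 v b hvbad hbb Af
            (fun h hh => hallowA v (hmB v hvB).2 h hh)
            (fun h hh => hallowA b (hQnotU1 b hb) h hh)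
            (by linarith [hεN001, hεN, hAbig, hN400])
          exact havd.reachable.trans (hvw.reachable.trans hbw.symm.reachable)
        rcases Finset.mem_union.mp hx with hxA | hxBF <;>
          rcases Finset.mem_union.mp hy with hyA | hyBF
        · obtain ⟨h, hh, hr1, hr2⟩ := hfind2 x y hbx hby Bf
            (fun h hh => hallowB x (hmA x hxA).2 h hh)
            (fun h hh => hallowB y (hmA y hyA).2 h hh)
            (by linarith [hεN001, hεN, hBbig, hN400])
          exact hr1.reachable.trans hr2.symm.reachable
        · exact hcaseAB x y hxA hyBF hbx hby
        · exact (hcaseAB y x hyA hxBF hby hbx).symm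
        · obtain ⟨h, hh, hr1, hr2⟩ := hfind2 x y hbx hby Af
            (fun h hh => hallowA x (hQnotU1 x hxBF) h hh)
            (fun h hh => hallowA y (hQnotU1 y hyBF) h hh)
            (by linarith [hεN001, hεN, hAbig, hN400])
          exact hr1.reachable.trans hr2.symm.reachable
    have hend : ∀ p ∈ P1 ∪ P2 ∪ P3 ∪ P4,
        ∃ a, a ∈ Af ∪ (Bf ∪ Ff) ∧ (a = p.1 ∨ a = p.2) := by
      intro p hp
      rcases Finset.mem_union.mp hp with hp | hp4
      · rcases Finset.mem_union.mp hp with hp | hp3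
        · rcases Finset.mem_union.mp hp with hp1 | hp2
          · exact ⟨p.2, Finset.mem_union_right _
              (Finset.mem_union_right _ (h1mem p hp1).2.1), Or.inr rfl⟩
          · exact ⟨p.1, Finset.mem_union_left _ (h2mem p hp2).1, Or.inl rfl⟩
        · exact ⟨p.1, Finset.mem_union_right _
            (Finset.mem_union_left _ (h2sY (h3mem p hp3).1)), Or.inl rfl⟩
      · exact ⟨p.1, Finset.mem_union_right _
          (Finset.mem_union_right _ ((h3sY.trans h1sY) ((h4mem p hp4).1))), Or.inl rfl⟩
    have hPgne : Pg.Nonempty := by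
      apply Finset.card_pos.mp
      by_contra hcon
      push_neg at hcon
      have h0 : Pg.card = 0 := by omega
      rw [h0] at hfinal
      push_cast at hfinal
      linarith [hεN001, hN400]
    obtain ⟨p0, hp0⟩ := hPgne
    have hp0P := hPgsub hp0
    have hp0good := (Finset.mem_filter.mp hp0).2
    obtain ⟨a0, ha0Q, ha0p⟩ := hend p0 hp0P
    have ha0bad : a0 ∉ Bad := by rcases ha0p with rfl | rfl; exacts [hp0good.1, hp0good.2]
    refine ⟨G.connectedComponentMk a0, M, hMmatch, ?_, ?_⟩
    · intro v hv
      rw [hMverts] at hv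
      simp only [Finset.coe_union, Set.mem_union, Finset.mem_coe, Finset.mem_image] at hv
      have hvp : ∃ p ∈ Pg, v = p.1 ∨ v = p.2 := by
        rcases hv with ⟨p, hp, rfl⟩ | ⟨p, hp, rfl⟩
        exacts [⟨p, hp, Or.inl rfl⟩, ⟨p, hp, Or.inr rfl⟩]
      obtain ⟨p, hp, hvp⟩ := hvp
      have hpP := hPgsub hp
      have hpgood := (Finset.mem_filter.mp hp).2
      have hadjp := hadjall p hpP
      obtain ⟨ap, hapQ, happ⟩ := hend p hpP
      have hapbad : ap ∉ Bad := by rcases happ with rfl | rfl; exacts [hpgood.1, hpgood.2]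
      have hr1 : G.Reachable v ap := by
        rcases hvp with rfl | rfl <;> rcases happ with rfl | rfl
        · exact SimpleGraph.Reachable.refl _
        · exact hadjp.reachable
        · exact hadjp.symm.reachable
        · exact SimpleGraph.Reachable.refl _
      have hr2 : G.Reachable ap a0 := hreachQ ap a0 hapQ ha0Q hapbad ha0bad
      rw [SimpleGraph.ConnectedComponent.mem_supp_iff]
      exact SimpleGraph.ConnectedComponent.sound (hr1.trans hr2)
    · rw [hMcard]
      push_cast
      have hexp : (1 - 5*ε) * (N:ℝ) = N - 5*(ε*N) := by ring
      rw [hexp]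
      linarith [hfinal]
  · -- Case (ii)
    intro hc2
    have hu2half : (N:ℝ)/2 ≤ (U2f.card : ℝ) := by rw [← hu2cast]; exact hc2
    by_cases htriv : (2 - 7*ε) * N - 2 * (U2.ncard:ℝ) ≤ 0
    · refine ⟨G.connectedComponentMk ⟨0, hNpos⟩, ⊥, ?_, ?_, ?_⟩
      · intro v hv
        simp only [SimpleGraph.Subgraph.verts_bot, Set.mem_empty_iff_false] at hv
      · rw [SimpleGraph.Subgraph.verts_bot]
        exact Set.empty_subset _
      · rw [SimpleGraph.Subgraph.verts_bot]
        simpa using htriv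
    · push_neg at htriv
      have htriv' : (0:ℝ) < (2 - 7*ε)*N - 2*(U2f.card:ℝ) := by rw [← hu2cast]; exact htriv
      have hN2u2 : N ≤ 2 * U2f.card := by
        have h : ((N:ℕ):ℝ) ≤ ((2*U2f.card:ℕ):ℝ) := by push_cast; linarith
        exact_mod_cast h
      have hεN001 : ε*(N:ℝ) ≤ 0.01*N := by nlinarith [hεs, hNR0]
      have hone : (1:ℝ) ≤ 0.25*(ε*N) := by linarith
      have hBadεN : (Bad.card:ℝ) ≤ 0.04*(ε*N) := by nlinarith [hBadR, hεs, mul_nonneg hε.le hNR0]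
      have hAleB : Af.card ≤ Bf.card := by omega
      -- Step 1 : A ↔ B
      obtain ⟨P1, A1, B1, h1mem, h1w, h1sX, h1sY, h1not, h1cX, h1cY, h1na⟩ :=
        greedyBip G.Adj Af.card Af Bf le_rfl hdAB
      -- Step 2 : F ↔ (B1 ∪ W)
      have hdFB1W : Disjoint Ff (B1 ∪ Wf) := Finset.disjoint_union_right.mpr
        ⟨(hdBF.symm).mono_right h1sY, hdWF.symm⟩
      obtain ⟨P2, F2, D2, h2mem, h2w, h2sX, h2sY, h2not, h2cX, h2cY, h2na⟩ :=
        greedyBip G.Adj Ff.card Ff (B1 ∪ Wf) le_rfl hdFB1W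
      have hmB1W : ∀ y, y ∈ B1 ∪ Wf → y ∈ U2 := by
        intro y hy
        rcases Finset.mem_union.mp hy with hy | hy
        · exact (hmB y (h1sY hy)).1
        · exact (hmW y hy).2
      -- leftover bounds
      have hA1R : (A1.card : ℝ) ≤ 0.08 * (ε*N) := by
        apply hsqb
        have hcle : A1.card * A1.card ≤ Rfin.card := by
          refine le_trans (Nat.mul_le_mul_left _ (by omega)) (hcross A1 B1
            ((hdAB.mono_left h1sX).mono_right h1sY) ?_)
          intro x hx y hy
          exact hrm x y (ne_of_mem_mem_disj (h1sX hx) (h1sY hy) hdAB)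
            (fun hc => (hmB y (h1sY hy)).2 hc.2) (fun hc => (hmA x (h1sX hx)).2 hc.1)
            (h1na x hx y hy)
        calc ((A1.card:ℝ)) * A1.card = ((A1.card * A1.card : ℕ) : ℝ) := by push_cast; ring
          _ ≤ (Rfin.card : ℝ) := Nat.cast_le.mpr hcle
          _ ≤ _ := hrfinR
      have hcB1W : (B1 ∪ Wf).card = B1.card + Wf.card :=
        Finset.card_union_of_disjoint ((hdWB.symm).mono_left h1sY)
      have hF2R : (F2.card : ℝ) ≤ 0.08 * (ε*N) := by
        apply hsqb
        have hF2leD2 : F2.card ≤ D2.card := by omega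
        have hcle : F2.card * F2.card ≤ Rfin.card := by
          refine le_trans (Nat.mul_le_mul_left _ hF2leD2) (hcross F2 D2
            ((hdFB1W.mono_left h2sX).mono_right h2sY) ?_)
          intro x hx y hy
          exact hrm x y (ne_of_mem_mem_disj (h2sX hx) (h2sY hy) hdFB1W)
            (fun hc => (hmF x (h2sX hx)).1 hc.1) (fun hc => (hmF x (h2sX hx)).2 hc.1)
            (h2na x hx y hy)
        calc ((F2.card:ℝ)) * F2.card = ((F2.card * F2.card : ℕ) : ℝ) := by push_cast; ring
          _ ≤ (Rfin.card : ℝ) := Nat.cast_le.mpr hcle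
          _ ≤ _ := hrfinR
      -- distinctness
      have hPD1 : PDist P1 := pdist_of_bip (fun p hp => ⟨(h1mem p hp).1, (h1mem p hp).2.1⟩) hdAB h1w
      have hPD2 : PDist P2 := pdist_of_bip (fun p hp => ⟨(h2mem p hp).1, (h2mem p hp).2.1⟩)
        hdFB1W h2w
      have hreg1 : ∀ p ∈ P1, p.1 ∈ Af ∧ p.2 ∈ Bf \ B1 := fun p hp =>
        ⟨(h1mem p hp).1, Finset.mem_sdiff.mpr ⟨(h1mem p hp).2.1, (h1not p hp).2⟩⟩
      have hreg2 : ∀ p ∈ P2, p.1 ∈ Ff ∧ p.2 ∈ B1 ∪ Wf := fun p hp =>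
        ⟨(h2mem p hp).1, (h2mem p hp).2.1⟩
      have sep12 : PSep P1 P2 := PSep.of_regions hreg1 hreg2 hdAF
        (Finset.disjoint_union_right.mpr ⟨hdAB.mono_right h1sY, hdWA.symm⟩)
        ((hdBF.mono_left Finset.sdiff_subset))
        (Finset.disjoint_union_right.mpr ⟨Finset.sdiff_disjoint,
          (hdWB.symm).mono_left Finset.sdiff_subset⟩)
      have hPDall : PDist (P1 ∪ P2) := hPD1.union hPD2 sep12
      have hPcard : (P1 ∪ P2).card = P1.card + P2.card :=
        Finset.card_union_of_disjoint sep12.disjoint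
      have hcov : 2 * (P1 ∪ P2).card + 2*A1.card + 2*F2.card
          = 2*(Af.card + Ff.card) := by
        rw [hPcard]; omega
      have hadjall : ∀ p ∈ P1 ∪ P2, G.Adj p.1 p.2 := by
        intro p hp
        rcases Finset.mem_union.mp hp with hp | hp
        · exact (h1mem p hp).2.2
        · exact (h2mem p hp).2.2
      -- filter out bad endpoints
      set Pg := (P1 ∪ P2).filter (fun p => p.1 ∉ Bad ∧ p.2 ∉ Bad) with hPgdef
      have hPgsub : Pg ⊆ P1 ∪ P2 := Finset.filter_subset _ _
      have hPgcard : (P1 ∪ P2).card ≤ Pg.card + Bad.card := by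
        have hmap : ((P1 ∪ P2) \ Pg).card ≤ Bad.card := by
          apply Finset.card_le_card_of_injOn (fun p => if p.1 ∈ Bad then p.1 else p.2)
          · intro p hp
            obtain ⟨hpP, hpn⟩ := Finset.mem_sdiff.mp hp
            have hpred : p.1 ∈ Bad ∨ p.2 ∈ Bad := by
              by_contra hcon
              push_neg at hcon
              exact hpn (Finset.mem_filter.mpr ⟨hpP, hcon.1, hcon.2⟩)
            by_cases hb : p.1 ∈ Bad
            · dsimp only; rw [if_pos hb]; exact hb
            · dsimp only; rw [if_neg hb]; exact hpred.resolve_left hb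
          · intro p hp q hq hfq
            dsimp only at hfq
            by_contra hne
            obtain ⟨d1, d2, d3, d4⟩ := hPDall p (Finset.mem_sdiff.mp hp).1 q
              (Finset.mem_sdiff.mp hq).1 hne
            by_cases hb1 : p.1 ∈ Bad <;> by_cases hb2 : q.1 ∈ Bad
            · rw [if_pos hb1, if_pos hb2] at hfq; exact d1 hfq
            · rw [if_pos hb1, if_neg hb2] at hfq; exact d2 hfq
            · rw [if_neg hb1, if_pos hb2] at hfq; exact d3 hfq
            · rw [if_neg hb1, if_neg hb2] at hfq; exact d4 hfq
        have hsplit : ((P1 ∪ P2) \ Pg).card + Pg.card = (P1 ∪ P2).card :=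
          Finset.card_sdiff_add_card_eq_card hPgsub
        omega
      obtain ⟨M, hMmatch, hMverts, hMcard⟩ := exists_matching_of_pairs G Pg
        (fun p hp => hadjall p (hPgsub hp))
        (fun p hp q hq hne => hPDall p (hPgsub hp) q (hPgsub hq) hne)
      have hAFu2 : (Af.card:ℝ) + Ff.card = N - U2f.card := by
        have hTotR : (Af.card:ℝ) + Bf.card + Wf.card + Ff.card = N := by exact_mod_cast hcardTot
        have hBWu2 : (Bf.card:ℝ) + Wf.card = U2f.card := by exact_mod_cast hcardB
        linarith
      have hbig : 3.5*(ε*N) < (N:ℝ) - U2f.card := by nlinarith [htriv']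
      have hfinal : (2:ℝ)*N - 2*U2f.card - 7*(ε*N) ≤ 2*(Pg.card:ℝ) := by
        have hcovR : 2*((P1∪P2).card:ℝ) + 2*(A1.card:ℝ) + 2*(F2.card:ℝ)
            = 2*((Af.card:ℝ) + Ff.card) := by exact_mod_cast hcov
        have hc' : ((P1∪P2).card:ℝ) ≤ (Pg.card:ℝ) + Bad.card := by exact_mod_cast hPgcard
        linarith [hA1R, hF2R, hBadεN, hεN]
      -- connectivity
      have hQnotU1 : ∀ v, v ∈ Bf ∪ Ff → v ∉ U1 := by
        intro v hv
        rcases Finset.mem_union.mp hv with hv | hv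
        · exact (hmB v hv).2
        · exact (hmF v hv).1
      have hAFcard : ((Af ∪ Ff).card : ℝ) = (N:ℝ) - U2f.card := by
        rw [Finset.card_union_of_disjoint hdAF]
        push_cast
        linarith [hAFu2]
      have hreachQ : ∀ x y, x ∈ Bf ∪ Ff → y ∈ Bf ∪ Ff → x ∉ Bad → y ∉ Bad →
          G.Reachable x y := by
        intro x y hx hy hbx hby
        obtain ⟨h, hh, hr1, hr2⟩ := hfind2 x y hbx hby (Af ∪ Ff)
          (fun h hh => hallowAF x (hQnotU1 x hx) h hh)
          (fun h hh => hallowAF y (hQnotU1 y hy) h hh)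
          (by rw [hAFcard]; linarith [hbig, hεN])
        exact hr1.reachable.trans hr2.symm.reachable
      have hend : ∀ p ∈ P1 ∪ P2, ∃ a, a ∈ Bf ∪ Ff ∧ (a = p.1 ∨ a = p.2) := by
        intro p hp
        rcases Finset.mem_union.mp hp with hp | hp
        · exact ⟨p.2, Finset.mem_union_left _ (h1mem p hp).2.1, Or.inr rfl⟩
        · exact ⟨p.1, Finset.mem_union_right _ (h2mem p hp).1, Or.inl rfl⟩
      have hPgne : Pg.Nonempty := by
        apply Finset.card_pos.mp
        by_contra hcon
        push_neg at hcon
        have h0 : Pg.card = 0 := by omega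
        rw [h0] at hfinal
        push_cast at hfinal
        linarith [hbig, hεN]
      obtain ⟨p0, hp0⟩ := hPgne
      have hp0P := hPgsub hp0
      have hp0good := (Finset.mem_filter.mp hp0).2
      obtain ⟨a0, ha0Q, ha0p⟩ := hend p0 hp0P
      have ha0bad : a0 ∉ Bad := by rcases ha0p with rfl | rfl; exacts [hp0good.1, hp0good.2]
      refine ⟨G.connectedComponentMk a0, M, hMmatch, ?_, ?_⟩
      · intro v hv
        rw [hMverts] at hv
        simp only [Finset.coe_union, Set.mem_union, Finset.mem_coe, Finset.mem_image] at hv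
        have hvp : ∃ p ∈ Pg, v = p.1 ∨ v = p.2 := by
          rcases hv with ⟨p, hp, rfl⟩ | ⟨p, hp, rfl⟩
          exacts [⟨p, hp, Or.inl rfl⟩, ⟨p, hp, Or.inr rfl⟩]
        obtain ⟨p, hp, hvp⟩ := hvp
        have hpP := hPgsub hp
        have hpgood := (Finset.mem_filter.mp hp).2
        have hadjp := hadjall p hpP
        obtain ⟨ap, hapQ, happ⟩ := hend p hpP
        have hapbad : ap ∉ Bad := by rcases happ with rfl | rfl; exacts [hpgood.1, hpgood.2]
        have hr1 : G.Reachable v ap := by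
          rcases hvp with rfl | rfl <;> rcases happ with rfl | rfl
          · exact SimpleGraph.Reachable.refl _
          · exact hadjp.reachable
          · exact hadjp.symm.reachable
          · exact SimpleGraph.Reachable.refl _
        have hr2 : G.Reachable ap a0 := hreachQ ap a0 hapQ ha0Q hapbad ha0bad
        rw [SimpleGraph.ConnectedComponent.mem_supp_iff]
        exact SimpleGraph.ConnectedComponent.sound (hr1.trans hr2)
      · rw [hMcard, hu2cast]
        push_cast
        have hexp : (2 - 7*ε) * (N:ℝ) - 2*(U2f.card:ℝ)
            = 2*N - 2*U2f.card - 7*(ε*N) := by ring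
        rw [hexp]
        linarith [hfinal]
end

section
/- Let F be a finite connected simple graph containing an odd cycle, and let M be a matching in F. Then F contains a closed walk of odd length which traverses every edge of M. -/
open SimpleGraph

lemma even_walk_through_edges {V : Type*} (F : SimpleGraph V) (hconn : F.Connected)
    (u : V) (S : Finset (Sym2 V)) (hsub : ↑S ⊆ F.edgeSet) :
    ∃ w : F.Walk u u, Even w.length ∧ ∀ e ∈ S, e ∈ w.edges := by
  classical
  induction S using Finset.induction_on with
  | empty => exact ⟨Walk.nil, by simp, by simp⟩
  | @insert a s ha ih =>
    obtain ⟨w, hw, hall⟩ := ih (fun e he => hsub (by simp [he]))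
    have haE : a ∈ F.edgeSet := hsub (by simp)
    induction a using Sym2.ind with
    | _ x y =>
      have hxy : F.Adj x y := haE
      obtain ⟨p⟩ := hconn.preconnected u x
      refine ⟨w.append (p.append (Walk.cons hxy (Walk.cons hxy.symm p.reverse))),
        ?_, ?_⟩
      · have : (w.append (p.append (Walk.cons hxy (Walk.cons hxy.symm p.reverse)))).length
            = w.length + (p.length + (1 + (1 + p.length))) := by
          simp [Walk.length_append, Walk.length_cons, Walk.length_reverse]
          omega
        rw [this]
        obtain ⟨k, hk⟩ := hw
        exact ⟨k + (p.length + 1), by omega⟩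
      · intro e he
        rw [Finset.mem_insert] at he
        rcases he with he | he
        · subst he
          simp [Walk.edges_append, Walk.edges_cons]
        · rw [Walk.edges_append]
          exact List.mem_append_left _ (hall e he)

theorem odd_closed_walk_through_matching {V : Type*} [Fintype V]
    (F : SimpleGraph V) (hconn : F.Connected)
    (hodd : ∃ (u : V) (w : F.Walk u u), w.IsCycle ∧ Odd w.length)
    (M : F.Subgraph) (hM : M.IsMatching) :
    ∃ (v : V) (w : F.Walk v v), Odd w.length ∧ ∀ e ∈ M.edgeSet, e ∈ w.edges := by
  obtain ⟨u, c, _, hc⟩ := hodd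
  have hfin : M.edgeSet.Finite := Set.toFinite _
  obtain ⟨w, hw, hall⟩ := even_walk_through_edges F hconn u hfin.toFinset
    (by rw [Set.Finite.coe_toFinset]; exact M.edgeSet_subset)
  refine ⟨u, c.append w, ?_, ?_⟩
  · rw [Walk.length_append]
    exact hc.add_even hw
  · intro e he
    rw [Walk.edges_append]
    exact List.mem_append_right _ (hall e (hfin.mem_toFinset.mpr he))
end
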